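/- arXiv:math/0004149 — 9 statements merged into one kernel-verified Lean document; each statement's English description precedes it below -/
import Mathlib

section
/- Let x and h be real numbers with 0 < h ≤ x, and let (a_n) and (b_n) be real numbers indexed by positive integers. Then ∫_x^{2x} (Σ_{y < n ≤ y+h} a_n)·(Σ_{y < m ≤ y+h} b_m) dy = Σ_{x < n ≤ 2x+h} a_n·b_n·f(n,x,h) + Σ_{0 < k ≤ h} Σ_{x < n ≤ 2x+h−k} (a_n·b_{n+k} + a_{n+k}·b_n)·f(n,x,h−k), where k runs over positive integers with k ≤ h. -/
open Finset ArithmeticFunction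

/-- The Generalized Riemann Hypothesis for Dirichlet L-functions: every zero of a
Dirichlet L-function in the critical strip lies on the critical line. -/
def GRH : Prop :=
  ∀ (N : ℕ) [NeZero N] (χ : DirichletCharacter ℂ N) (s : ℂ),
    DirichletCharacter.LFunction χ s = 0 → 0 < s.re → s.re < 1 → s.re = 1 / 2

/-- `ψ(x; q, a) = ∑_{n ≤ x, n ≡ a (mod q)} Λ(n)`. -/
noncomputable def psi (x : ℝ) (q a : ℕ) : ℝ :=
  ∑ n ∈ (Finset.Icc 1 ⌊x⌋₊).filter (fun n : ℕ => (n : ZMod q) = (a : ZMod q)),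
    ArithmeticFunction.vonMangoldt n

/-- `I(x,h,q,a) = ∫_x^{2x} (ψ(y+h;q,a) − ψ(y;q,a) − h/φ(q))² dy`. -/
noncomputable def momentI (x h : ℝ) (q a : ℕ) : ℝ :=
  ∫ y in x..(2 * x), (psi (y + h) q a - psi y q a - h / (q.totient : ℝ)) ^ 2

/-- `λ_R(n) = ∑_{r ≤ R} (μ²(r)/φ(r)) ∑_{d ∣ (r,n)} d·μ(d)`. -/
noncomputable def lamR (R : ℝ) (n : ℕ) : ℝ :=
  ∑ r ∈ Finset.Icc 1 ⌊R⌋₊,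
    ((ArithmeticFunction.moebius r : ℝ) ^ 2 / (r.totient : ℝ)) *
      ∑ d ∈ (Nat.gcd r n).divisors, (d : ℝ) * (ArithmeticFunction.moebius d : ℝ)

/-- `c = γ + ∑_p (log p)/(p(p−1))`. -/
noncomputable def cGY : ℝ :=
  Real.eulerMascheroniConstant +
    ∑' p : Nat.Primes, Real.log (p : ℕ) / (((p : ℕ) : ℝ) * (((p : ℕ) : ℝ) - 1))

/-- `v(k) = ∑_{p ∣ k} (log p)/p`. -/
noncomputable def vGY (k : ℕ) : ℝ := ∑ p ∈ k.primeFactors, Real.log p / (p : ℝ)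

/-- `w(k) = ∏_{p ∣ k} (1 + 1/√p)`. -/
noncomputable def wGY (k : ℕ) : ℝ := ∏ p ∈ k.primeFactors, (1 + 1 / Real.sqrt p)

/-- `g(k) = ∏_{p ∣ k} (1 + p/(p−1))`. -/
noncomputable def gGY (k : ℕ) : ℝ := ∏ p ∈ k.primeFactors, (1 + (p : ℝ) / ((p : ℝ) - 1))

/-- The twin prime constant `C = ∏_{p > 2} (1 − 1/(p−1)²)`. -/
noncomputable def twinC : ℝ :=
  ∏' p : Nat.Primes, (if 2 < (p : ℕ) then 1 - 1 / (((p : ℕ) : ℝ) - 1) ^ 2 else 1)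

/-- The singular series `𝔖(k)`. -/
noncomputable def singSeries (k : ℕ) : ℝ :=
  if 2 ∣ k ∧ k ≠ 0 then
    2 * twinC * ∏ p ∈ k.primeFactors.filter (fun p => 2 < p), ((p : ℝ) - 1) / ((p : ℝ) - 2)
  else 0

/-- `f(n,x,h)`, the length of the interval `[x,2x] ∩ [n−h,n)`. -/
noncomputable def flen (n : ℕ) (x h : ℝ) : ℝ :=
  if x ≤ n ∧ (n : ℝ) < x + h then (n : ℝ) - x
  else if x + h ≤ n ∧ (n : ℝ) ≤ 2 * x then h
  else if 2 * x < n ∧ (n : ℝ) ≤ 2 * x + h then 2 * x - n + h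
  else 0

section GYaux
open MeasureTheory

lemma gy_ite_mul_ite (c1 d1 c2 d2 y : ℝ) :
    (if c1 ≤ y ∧ y < d1 then (1:ℝ) else 0) * (if c2 ≤ y ∧ y < d2 then (1:ℝ) else 0)
      = if c1 ⊔ c2 ≤ y ∧ y < d1 ⊓ d2 then (1:ℝ) else 0 := by
  by_cases h1 : c1 ≤ y ∧ y < d1 <;> by_cases h2 : c2 ≤ y ∧ y < d2 <;>
    simp [h1, h2, sup_le_iff, lt_inf_iff] <;> tauto

lemma gy_indicator_eq (c d C : ℝ) :
    (fun y => C * (if c ≤ y ∧ y < d then (1:ℝ) else 0)) = (Set.Ico c d).indicator (fun _ => C) := by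
  funext y; by_cases h : c ≤ y ∧ y < d <;> simp [Set.indicator_apply, Set.mem_Ico, h]

lemma gy_intervalIntegrable (u v c d C : ℝ) :
    IntervalIntegrable (fun y => C * (if c ≤ y ∧ y < d then (1:ℝ) else 0)) volume u v := by
  rw [gy_indicator_eq]
  apply Integrable.intervalIntegrable
  rw [integrable_indicator_iff measurableSet_Ico]
  exact integrableOn_const (by rw [Real.volume_Ico]; exact ENNReal.ofReal_ne_top)

lemma gy_integral_ind (u v c d C : ℝ) (huv : u ≤ v) :
    (∫ y in u..v, C * (if c ≤ y ∧ y < d then (1:ℝ) else 0))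
      = C * (0 ⊔ (v ⊓ d - u ⊔ c)) := by
  rw [gy_indicator_eq, intervalIntegral.integral_of_le huv,
    setIntegral_indicator measurableSet_Ico, setIntegral_const]
  have hμ : volume (Set.Ioc u v ∩ Set.Ico c d) = ENNReal.ofReal (v ⊓ d - u ⊔ c) := by
    apply le_antisymm
    · have hsub : Set.Ioc u v ∩ Set.Ico c d ⊆ Set.Icc (u ⊔ c) (v ⊓ d) := by
        rintro y ⟨⟨h1, h2⟩, h3, h4⟩
        exact ⟨sup_le h1.le h3, le_inf h2 h4.le⟩
      calc volume (Set.Ioc u v ∩ Set.Ico c d) ≤ volume (Set.Icc (u ⊔ c) (v ⊓ d)) :=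
            measure_mono hsub
        _ = ENNReal.ofReal (v ⊓ d - u ⊔ c) := Real.volume_Icc
    · have hsub : Set.Ioo (u ⊔ c) (v ⊓ d) ⊆ Set.Ioc u v ∩ Set.Ico c d := by
        rintro y ⟨h1, h2⟩
        rw [sup_lt_iff] at h1; rw [lt_inf_iff] at h2
        exact ⟨⟨h1.1, h2.1.le⟩, h1.2.le, h2.2⟩
      calc ENNReal.ofReal (v ⊓ d - u ⊔ c) = volume (Set.Ioo (u ⊔ c) (v ⊓ d)) :=
            Real.volume_Ioo.symm
        _ ≤ volume (Set.Ioc u v ∩ Set.Ico c d) := measure_mono hsub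
  rw [measureReal_def, hμ]
  rcases le_or_gt 0 (v ⊓ d - u ⊔ c) with h | h
  · rw [ENNReal.toReal_ofReal h, sup_eq_right.2 h, smul_eq_mul]; ring
  · rw [ENNReal.ofReal_of_nonpos h.le, sup_eq_left.2 h.le]; simp

lemma gy_Lval (x h' : ℝ) (hh0 : 0 ≤ h') (hhx : h' ≤ x) (n : ℕ)
    (hn1 : x < n) (hn2 : (n : ℝ) ≤ 2 * x + h') :
    0 ⊔ ((2 * x) ⊓ (n : ℝ) - x ⊔ ((n : ℝ) - h')) = flen n x h' := by
  unfold flen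
  by_cases h1 : (n : ℝ) < x + h'
  · rw [if_pos ⟨hn1.le, h1⟩, sup_eq_left.2 (by linarith : (n:ℝ) - h' ≤ x),
      inf_eq_right.2 (by linarith : (n:ℝ) ≤ 2*x), sup_eq_right.2 (by linarith : (0:ℝ) ≤ (n:ℝ) - x)]
  · push_neg at h1
    by_cases h2 : (n : ℝ) ≤ 2 * x
    · rw [if_neg (fun hc => absurd hc.2 (not_lt.2 h1)), if_pos ⟨h1, h2⟩,
        sup_eq_right.2 (by linarith : x ≤ (n:ℝ) - h'), inf_eq_right.2 h2,
        show (n:ℝ) - ((n:ℝ) - h') = h' by ring, sup_eq_right.2 hh0]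
    · push_neg at h2
      rw [if_neg (fun hc => absurd hc.2 (not_lt.2 h1)),
        if_neg (fun hc => absurd hc.2 (not_le.2 h2)), if_pos ⟨h2, hn2⟩,
        sup_eq_right.2 (by linarith : x ≤ (n:ℝ) - h'), inf_eq_left.2 h2.le,
        sup_eq_right.2 (by linarith : (0:ℝ) ≤ 2*x - ((n:ℝ) - h'))]
      ring

lemma gy_swap (S : Finset ℕ) (F : ℕ → ℕ → ℝ) :
    ∑ n ∈ S, ∑ m ∈ S.filter (fun m => m < n), F n m
      = ∑ n ∈ S, ∑ m ∈ S.filter (fun m => n < m), F m n := by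
  calc ∑ n ∈ S, ∑ m ∈ S.filter (fun m => m < n), F n m
      = ∑ n ∈ S, ∑ m ∈ S, if m < n then F n m else 0 :=
        Finset.sum_congr rfl fun n _ => Finset.sum_filter _ _
    _ = ∑ m ∈ S, ∑ n ∈ S, if m < n then F n m else 0 := Finset.sum_comm
    _ = ∑ n ∈ S, ∑ m ∈ S.filter (fun m => n < m), F m n :=
        Finset.sum_congr rfl fun n _ => (Finset.sum_filter _ _).symm

theorem lemma1_integral_identity (x h : ℝ) (h0 : 0 < h) (hhx : h ≤ x)
    (a b : ℕ → ℝ) :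
    (∫ y in x..(2 * x),
        (∑ n ∈ Finset.Ioc ⌊y⌋₊ ⌊y + h⌋₊, a n) * (∑ m ∈ Finset.Ioc ⌊y⌋₊ ⌊y + h⌋₊, b m))
      = (∑ n ∈ Finset.Ioc ⌊x⌋₊ ⌊2 * x + h⌋₊, a n * b n * flen n x h)
        + ∑ k ∈ Finset.Icc 1 ⌊h⌋₊,
            ∑ n ∈ Finset.Ioc ⌊x⌋₊ ⌊2 * x + h - k⌋₊,
              (a n * b (n + k) + a (n + k) * b n) * flen n x (h - k) := by
  have hx : 0 < x := h0.trans_le hhx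
  have hx2 : x ≤ 2 * x := by linarith
  set N0 := ⌊x⌋₊ with hN0
  set N1 := ⌊2 * x + h⌋₊ with hN1
  set S : Finset ℕ := Finset.Ioc N0 N1 with hS
  have hmem : ∀ n ∈ S, x < (n:ℝ) ∧ (n:ℝ) ≤ 2*x+h := by
    intro n hn
    rw [hS, Finset.mem_Ioc] at hn
    exact ⟨(Nat.floor_lt hx.le).1 hn.1,
      le_trans (Nat.cast_le.2 hn.2) (Nat.floor_le (by linarith))⟩
  set F : ℕ → ℕ → ℝ := fun n m => (a n * b m) *
    (0 ⊔ ((2*x) ⊓ ((n:ℝ) ⊓ (m:ℝ)) - x ⊔ (((n:ℝ) - h) ⊔ ((m:ℝ) - h)))) with hF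
  set G : ℕ → ℕ → ℝ := fun n k => (a n * b (n+k) + a (n+k) * b n) *
    (0 ⊔ ((2*x) ⊓ (n:ℝ) - x ⊔ ((n:ℝ) + (k:ℝ) - h))) with hG
  -- Step 1: the integral equals the double sum of F
  have key : Set.EqOn
      (fun y => (∑ n ∈ Finset.Ioc ⌊y⌋₊ ⌊y + h⌋₊, a n) * (∑ m ∈ Finset.Ioc ⌊y⌋₊ ⌊y + h⌋₊, b m))
      (fun y => ∑ n ∈ S, ∑ m ∈ S, (a n * b m) *
        (if ((n:ℝ) - h) ⊔ ((m:ℝ) - h) ≤ y ∧ y < (n:ℝ) ⊓ (m:ℝ) then (1:ℝ) else 0))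
      (Set.uIcc x (2*x)) := by
    intro y hy
    rw [Set.uIcc_of_le hx2, Set.mem_Icc] at hy
    obtain ⟨hy1, hy2⟩ := hy
    have hy0 : 0 ≤ y := by linarith
    have hsum : ∀ c : ℕ → ℝ, ∑ n ∈ Finset.Ioc ⌊y⌋₊ ⌊y + h⌋₊, c n
        = ∑ n ∈ S, c n * (if (n:ℝ) - h ≤ y ∧ y < n then 1 else 0) := by
      intro c
      have e1 : ∀ n ∈ S, c n * (if (n:ℝ) - h ≤ y ∧ y < n then (1:ℝ) else 0)
          = if (n:ℝ) - h ≤ y ∧ y < n then c n else 0 := by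
        intro n _; by_cases hc : (n:ℝ) - h ≤ y ∧ y < n <;> simp [hc]
      rw [Finset.sum_congr rfl e1, ← Finset.sum_filter]
      refine (Finset.sum_congr ?_ fun _ _ => rfl).symm
      ext n
      simp only [Finset.mem_filter, Finset.mem_Ioc, hS]
      constructor
      · rintro ⟨⟨hn0, hn1⟩, hc1, hc2⟩
        exact ⟨(Nat.floor_lt hy0).2 hc2, Nat.le_floor (by linarith)⟩
      · rintro ⟨hn1, hn2⟩
        have hyn : y < n := (Nat.floor_lt hy0).1 hn1
        have hnyh : (n:ℝ) ≤ y + h := le_trans (Nat.cast_le.2 hn2) (Nat.floor_le (by linarith))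
        refine ⟨⟨?_, ?_⟩, by linarith, hyn⟩
        · exact lt_of_le_of_lt (Nat.floor_le_floor hy1) hn1
        · exact hn2.trans (Nat.floor_le_floor (by linarith))
    simp only
    rw [hsum a, hsum b, Finset.sum_mul_sum]
    refine Finset.sum_congr rfl fun n _ => Finset.sum_congr rfl fun m _ => ?_
    rw [mul_mul_mul_comm, gy_ite_mul_ite]
  rw [intervalIntegral.integral_congr key]
  have int0 : ∀ (n m : ℕ), IntervalIntegrable
      (fun y => a n * b m * (if ((n:ℝ) - h) ⊔ ((m:ℝ) - h) ≤ y ∧ y < (n:ℝ) ⊓ (m:ℝ)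
        then (1:ℝ) else 0)) volume x (2*x) := by
    intro n m
    have := gy_intervalIntegrable x (2*x) (((n:ℝ) - h) ⊔ ((m:ℝ) - h)) ((n:ℝ) ⊓ (m:ℝ)) (a n * b m)
    simpa [mul_assoc] using this
  have int1 : ∀ n ∈ S, IntervalIntegrable
      (fun y => ∑ m ∈ S, a n * b m * (if ((n:ℝ) - h) ⊔ ((m:ℝ) - h) ≤ y ∧ y < (n:ℝ) ⊓ (m:ℝ)
        then (1:ℝ) else 0)) volume x (2*x) := by
    intro n _
    have h1 := IntervalIntegrable.sum S (fun m (_ : m ∈ S) => int0 n m)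
    have h2 : (fun y => ∑ m ∈ S, a n * b m * (if ((n:ℝ) - h) ⊔ ((m:ℝ) - h) ≤ y ∧ y < (n:ℝ) ⊓ (m:ℝ)
        then (1:ℝ) else 0)) = (∑ m ∈ S, fun y => a n * b m * (if ((n:ℝ) - h) ⊔ ((m:ℝ) - h) ≤ y ∧ y < (n:ℝ) ⊓ (m:ℝ)
        then (1:ℝ) else 0)) := by
      funext y; rw [Finset.sum_apply]
    rw [h2]; exact h1
  rw [intervalIntegral.integral_finset_sum int1]
  have e2 : ∀ n ∈ S, (∫ y in x..(2*x), ∑ m ∈ S, a n * b m *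
      (if ((n:ℝ) - h) ⊔ ((m:ℝ) - h) ≤ y ∧ y < (n:ℝ) ⊓ (m:ℝ) then (1:ℝ) else 0))
      = ∑ m ∈ S, F n m := by
    intro n _
    rw [intervalIntegral.integral_finset_sum (fun m _ => int0 n m)]
    refine Finset.sum_congr rfl fun m _ => ?_
    exact gy_integral_ind x (2*x) (((n:ℝ) - h) ⊔ ((m:ℝ) - h)) ((n:ℝ) ⊓ (m:ℝ)) (a n * b m) hx2
  rw [Finset.sum_congr rfl e2]
  -- basic facts about F and G
  have hFG : ∀ n k : ℕ, F n (n+k) + F (n+k) n = G n k := by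
    intro n k
    have hle : (n:ℝ) ≤ (↑(n+k):ℝ) := by push_cast; linarith [(Nat.cast_nonneg k : (0:ℝ) ≤ k)]
    have c1 : (n:ℝ) ⊓ (↑(n+k):ℝ) = (n:ℝ) := inf_eq_left.2 hle
    have c2 : ((n:ℝ) - h) ⊔ ((↑(n+k):ℝ) - h) = (↑(n+k):ℝ) - h := sup_eq_right.2 (by linarith)
    have c1' : (↑(n+k):ℝ) ⊓ (n:ℝ) = (n:ℝ) := inf_eq_right.2 hle
    have c2' : ((↑(n+k):ℝ) - h) ⊔ ((n:ℝ) - h) = (↑(n+k):ℝ) - h := sup_eq_left.2 (by linarith)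
    simp only [hF, hG, c1, c2, c1', c2']
    push_cast
    ring
  have Gz : ∀ n k : ℕ, (2*x) ⊓ (n:ℝ) ≤ x ⊔ ((n:ℝ) + (k:ℝ) - h) → G n k = 0 := by
    intro n k hle
    simp only [hG]
    rw [sup_eq_left.2 (by linarith), mul_zero]
  -- split the double sum
  have split : ∀ n ∈ S, ∑ m ∈ S, F n m
      = F n n + ∑ m ∈ S.filter (fun m => n < m), F n m + ∑ m ∈ S.filter (fun m => m < n), F n m := by
    intro n hn
    rw [← Finset.sum_filter_add_sum_filter_not S (fun m => n < m)]
    have e : S.filter (fun m => ¬ n < m) = insert n (S.filter (fun m => m < n)) := by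
      ext m
      simp only [Finset.mem_filter, Finset.mem_insert, not_lt]
      constructor
      · rintro ⟨hm, hle⟩
        rcases eq_or_lt_of_le hle with he | hlt
        · exact Or.inl he
        · exact Or.inr ⟨hm, hlt⟩
      · rintro (rfl | ⟨hm, hlt⟩)
        · exact ⟨hn, le_refl _⟩
        · exact ⟨hm, hlt.le⟩
    rw [e, Finset.sum_insert (by simp)]
    ring
  have reidx : ∀ n ∈ S, ∑ m ∈ S.filter (fun m => n < m), (F n m + F m n)
      = ∑ k ∈ Finset.Icc 1 N1, G n k := by
    intro n hn
    have hnN : N0 < n ∧ n ≤ N1 := by rwa [hS, Finset.mem_Ioc] at hn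
    have e : S.filter (fun m => n < m) = Finset.Ioc n N1 := by
      ext m; simp only [hS, Finset.mem_filter, Finset.mem_Ioc]; omega
    rw [e]
    have e2 : ∑ m ∈ Finset.Ioc n N1, (F n m + F m n)
        = ∑ k ∈ Finset.Icc 1 (N1 - n), G n k := by
      refine Finset.sum_nbij' (i := fun m => m - n) (j := fun k => n + k) ?_ ?_ ?_ ?_ ?_
      · intro m hm; rw [Finset.mem_Ioc] at hm
        show m - n ∈ Finset.Icc 1 (N1 - n); rw [Finset.mem_Icc]; omega
      · intro k hk; rw [Finset.mem_Icc] at hk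
        show n + k ∈ Finset.Ioc n N1; rw [Finset.mem_Ioc]; omega
      · intro m hm; rw [Finset.mem_Ioc] at hm; show n + (m - n) = m; omega
      · intro k hk; rw [Finset.mem_Icc] at hk; show (n + k) - n = k; omega
      · intro m hm
        rw [Finset.mem_Ioc] at hm
        show F n m + F m n = G n (m - n)
        rw [← hFG n (m - n), Nat.add_sub_cancel' hm.1.le]
    rw [e2]
    refine Finset.sum_subset (Finset.Icc_subset_Icc_right (Nat.sub_le N1 n)) ?_
    intro k hk hk'
    rw [Finset.mem_Icc] at hk hk'
    have hbig : N1 + 1 ≤ n + k := by omega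
    have hbig' : 2*x + h < (n:ℝ) + (k:ℝ) := by
      have := Nat.lt_floor_add_one (2*x + h)
      have hc : ((N1:ℝ) + 1) ≤ (n:ℝ) + (k:ℝ) := by exact_mod_cast hbig
      rw [← hN1] at this
      linarith
    refine Gz n k ?_
    have t1 : (2*x) ⊓ (n:ℝ) ≤ 2*x := inf_le_left
    have t2 : (n:ℝ) + (k:ℝ) - h ≤ x ⊔ ((n:ℝ) + (k:ℝ) - h) := le_sup_right
    linarith
  calc ∑ n ∈ S, ∑ m ∈ S, F n m
      = ∑ n ∈ S, (F n n + ∑ m ∈ S.filter (fun m => n < m), F n m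
          + ∑ m ∈ S.filter (fun m => m < n), F n m) := Finset.sum_congr rfl split
    _ = ∑ n ∈ S, F n n + (∑ n ∈ S, ∑ m ∈ S.filter (fun m => n < m), F n m
          + ∑ n ∈ S, ∑ m ∈ S.filter (fun m => m < n), F n m) := by
        rw [Finset.sum_add_distrib, Finset.sum_add_distrib]; ring
    _ = ∑ n ∈ S, F n n + ∑ n ∈ S, ∑ m ∈ S.filter (fun m => n < m), (F n m + F m n) := by
        rw [gy_swap, ← Finset.sum_add_distrib]
        congr 1
        exact Finset.sum_congr rfl fun n _ => (Finset.sum_add_distrib).symm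
    _ = ∑ n ∈ S, F n n + ∑ n ∈ S, ∑ k ∈ Finset.Icc 1 N1, G n k := by
        rw [Finset.sum_congr rfl reidx]
    _ = ∑ n ∈ S, F n n + ∑ k ∈ Finset.Icc 1 N1, ∑ n ∈ S, G n k := by
        rw [Finset.sum_comm]
    _ = ∑ n ∈ S, F n n + ∑ k ∈ Finset.Icc 1 ⌊h⌋₊, ∑ n ∈ S, G n k := by
        congr 1
        refine (Finset.sum_subset (Finset.Icc_subset_Icc_right
          (Nat.floor_le_floor (by linarith))) ?_).symm
        intro k hk hk'
        rw [Finset.mem_Icc] at hk hk'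
        have hk1 : ⌊h⌋₊ < k := by omega
        have hhk : h < (k:ℝ) := (Nat.floor_lt h0.le).1 hk1
        refine Finset.sum_eq_zero fun n _ => Gz n k ?_
        have t1 : (2*x) ⊓ (n:ℝ) ≤ (n:ℝ) := inf_le_right
        have t2 : (n:ℝ) + (k:ℝ) - h ≤ x ⊔ ((n:ℝ) + (k:ℝ) - h) := le_sup_right
        linarith
    _ = ∑ n ∈ S, F n n + ∑ k ∈ Finset.Icc 1 ⌊h⌋₊,
          ∑ n ∈ Finset.Ioc N0 ⌊2*x + h - (k:ℝ)⌋₊, G n k := by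
        congr 1
        refine Finset.sum_congr rfl fun k hk => ?_
        have hk' := Finset.mem_Icc.1 hk
        have hkh : (k:ℝ) ≤ h := le_trans (Nat.cast_le.2 hk'.2) (Nat.floor_le h0.le)
        refine (Finset.sum_subset ?_ ?_).symm
        · rw [hS]; exact Finset.Ioc_subset_Ioc_right (Nat.floor_le_floor (by linarith))
        · intro n hn hn'
          simp only [Finset.mem_Ioc, not_and, not_le] at hn'
          have hn0 : N0 < n ∧ n ≤ N1 := by rwa [hS, Finset.mem_Ioc] at hn
          have hfl : ⌊2*x + h - (k:ℝ)⌋₊ < n := hn' hn0.1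
          have h2 : 2*x + h - (k:ℝ) < (n:ℝ) := (Nat.floor_lt (by linarith)).1 hfl
          refine Gz n k ?_
          have t1 : (2*x) ⊓ (n:ℝ) ≤ 2*x := inf_le_left
          have t2 : (n:ℝ) + (k:ℝ) - h ≤ x ⊔ ((n:ℝ) + (k:ℝ) - h) := le_sup_right
          linarith
    _ = ∑ n ∈ S, a n * b n * flen n x h + ∑ k ∈ Finset.Icc 1 ⌊h⌋₊,
          ∑ n ∈ Finset.Ioc N0 ⌊2*x + h - (k:ℝ)⌋₊,
            (a n * b (n + k) + a (n + k) * b n) * flen n x (h - (k:ℝ)) := by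
        congr 1
        · refine Finset.sum_congr rfl fun n hn => ?_
          obtain ⟨hxn, hn2⟩ := hmem n hn
          simp only [hF, inf_idem, sup_idem]
          rw [gy_Lval x h h0.le hhx n hxn hn2]
        · refine Finset.sum_congr rfl fun k hk => Finset.sum_congr rfl fun n hn => ?_
          have hk' := Finset.mem_Icc.1 hk
          have hkh : (k:ℝ) ≤ h := le_trans (Nat.cast_le.2 hk'.2) (Nat.floor_le h0.le)
          have hk0 : (0:ℝ) ≤ (k:ℝ) := Nat.cast_nonneg k
          rw [Finset.mem_Ioc] at hn
          have hxn : x < (n:ℝ) := (Nat.floor_lt hx.le).1 hn.1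
          have hn2 : (n:ℝ) ≤ 2*x + (h - (k:ℝ)) := by
            have := le_trans (Nat.cast_le.2 hn.2) (Nat.floor_le (by linarith : (0:ℝ) ≤ 2*x + h - (k:ℝ)))
            linarith
          simp only [hG]
          rw [show (n:ℝ) + (k:ℝ) - h = (n:ℝ) - (h - (k:ℝ)) by ring,
            gy_Lval x (h - (k:ℝ)) (by linarith) (by linarith) n hxn hn2]

end GYaux
end

section
/- Let x and h be real numbers with 0 < h ≤ x, let (c_n) be real numbers indexed by positive integers, and set C(u) = Σ_{n ≤ u} c_n. Then Σ_{x < n ≤ 2x+h} c_n·f(n,x,h) = ∫_{2x}^{2x+h} C(u) du − ∫_x^{x+h} C(u) du. -/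
open Finset ArithmeticFunction

open MeasureTheory

lemma step_integrable (n C p q : ℝ) :
    IntervalIntegrable (fun u => if n ≤ u then C else 0) MeasureTheory.volume p q := by
  have : (fun u => if n ≤ u then C else 0) = Set.indicator (Set.Ici n) (fun _ => C) := by
    funext u; simp [Set.indicator_apply]
  rw [this, intervalIntegrable_iff]
  exact (integrableOn_const measure_Ioc_lt_top.ne).indicator measurableSet_Ici

lemma step_integral (n C a b : ℝ) (hab : a ≤ b) :
    ∫ u in a..b, (if n ≤ u then C else 0) = C * (b - max a (min n b)) := by
  set m := max a (min n b) with hm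
  have hma : a ≤ m := le_max_left _ _
  have hmb : m ≤ b := max_le hab (min_le_right _ _)
  have h1 : ∫ u in a..m, (if n ≤ u then C else 0) = 0 := by
    apply intervalIntegral.integral_zero_ae
    have hne : ∀ᵐ u : ℝ, u ≠ n := by
      rw [MeasureTheory.ae_iff]
      simp only [not_not]
      have h' : {u : ℝ | u = n} = {n} := by ext; simp
      rw [h']; exact measure_singleton n
    filter_upwards [hne] with u hu hmem
    rw [Set.uIoc_of_le hma] at hmem
    rcases lt_or_ge a n with h' | h'
    · have hmn : m ≤ n := max_le h'.le (min_le_left _ _)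
      exact if_neg (not_le.mpr (lt_of_le_of_ne (hmem.2.trans hmn) hu))
    · have : m = a := by
        rw [hm, min_eq_left (h'.trans hab), max_eq_left h']
      rw [this] at hmem
      exact absurd hmem (by simp)
  have h2 : ∫ u in m..b, (if n ≤ u then C else 0) = C * (b - m) := by
    have : ∫ u in m..b, (if n ≤ u then C else 0) = ∫ _ in m..b, C := by
      apply intervalIntegral.integral_congr_ae
      filter_upwards with u hmem
      rw [Set.uIoc_of_le hmb] at hmem
      rcases le_or_gt n b with h' | h'
      · have : n ≤ m := le_max_of_le_right (le_min le_rfl h')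
        exact if_pos (this.trans hmem.1.le)
      · have : m = b := by rw [hm, min_eq_right h'.le, max_eq_right hab]
        rw [this] at hmem
        exact absurd hmem (by simp)
    rw [this, intervalIntegral.integral_const, smul_eq_mul]; ring
  rw [← intervalIntegral.integral_add_adjacent_intervals
    (step_integrable n C a m) (step_integrable n C m b), h1, h2, zero_add]

lemma sum_integral (a b : ℝ) (ha : 0 ≤ a) (hab : a ≤ b) (N : ℕ) (hN : ⌊b⌋₊ ≤ N)
    (c : ℕ → ℝ) :
    ∫ u in a..b, (∑ n ∈ Finset.Icc 1 ⌊u⌋₊, c n)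
      = ∑ n ∈ Finset.Icc 1 N, c n * (b - max a (min n b)) := by
  have key : ∀ u ∈ Set.uIcc a b,
      (∑ n ∈ Finset.Icc 1 ⌊u⌋₊, c n)
        = ∑ n ∈ Finset.Icc 1 N, (if (n : ℝ) ≤ u then c n else 0) := by
    intro u hu
    rw [Set.uIcc_of_le hab] at hu
    have hu0 : 0 ≤ u := ha.trans hu.1
    rw [← Finset.sum_filter]
    apply Finset.sum_congr _ (fun _ _ => rfl)
    ext n
    simp only [Finset.mem_Icc, Finset.mem_filter]
    constructor
    · intro ⟨h1, h2⟩
      exact ⟨⟨h1, h2.trans ((Nat.floor_le_floor hu.2).trans hN)⟩,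
        (Nat.le_floor_iff hu0).mp h2⟩
    · intro ⟨⟨h1, _⟩, h3⟩
      exact ⟨h1, Nat.le_floor h3⟩
  rw [intervalIntegral.integral_congr key,
    intervalIntegral.integral_finset_sum (fun (n : ℕ) _ => step_integrable (n:ℝ) (c n) a b)]
  exact Finset.sum_congr rfl fun (n : ℕ) _ => step_integral (n:ℝ) (c n) a b hab

theorem lemma2_summation_identity (x h : ℝ) (h0 : 0 < h) (hhx : h ≤ x)
    (c : ℕ → ℝ) :
    (∑ n ∈ Finset.Ioc ⌊x⌋₊ ⌊2 * x + h⌋₊, c n * flen n x h)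
      = (∫ u in (2 * x)..(2 * x + h), ∑ n ∈ Finset.Icc 1 ⌊u⌋₊, c n)
        - ∫ u in x..(x + h), ∑ n ∈ Finset.Icc 1 ⌊u⌋₊, c n := by
  have hx : 0 < x := h0.trans_le hhx
  set N := ⌊2 * x + h⌋₊ with hN
  rw [sum_integral (2 * x) (2 * x + h) (by linarith) (by linarith) N le_rfl c,
    sum_integral x (x + h) (by linarith) (by linarith) N
      (Nat.floor_le_floor (by linarith)) c,
    ← Finset.sum_sub_distrib,
    show Finset.Icc 1 N = Finset.Ioc 0 N from Finset.Icc_add_one_left_eq_Ioc 0 N,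
    ← Finset.sum_Ioc_consecutive _ (Nat.zero_le ⌊x⌋₊)
      (Nat.floor_le_floor (by linarith : x ≤ 2 * x + h))]
  have first : ∑ n ∈ Finset.Ioc 0 ⌊x⌋₊,
      (c n * (2 * x + h - max (2 * x) (min (n : ℝ) (2 * x + h)))
        - c n * (x + h - max x (min (n : ℝ) (x + h)))) = 0 := by
    apply Finset.sum_eq_zero
    intro n hn
    have hnx : (n : ℝ) ≤ x := (Nat.le_floor_iff hx.le).mp (Finset.mem_Ioc.mp hn).2
    rw [min_eq_left (by linarith), min_eq_left (by linarith),
      max_eq_left hnx, max_eq_left (by linarith)]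
    ring
  rw [first, zero_add]
  apply Finset.sum_congr rfl
  intro n hn
  obtain ⟨hn1, hn2⟩ := Finset.mem_Ioc.mp hn
  have hxn : x < n := (Nat.floor_lt hx.le).mp hn1
  have hn2x : (n : ℝ) ≤ 2 * x + h := (Nat.le_floor_iff (by linarith)).mp hn2
  rcases lt_or_ge (n : ℝ) (x + h) with hc1 | hc1
  · rw [flen, if_pos ⟨hxn.le, hc1⟩, min_eq_left hc1.le, max_eq_right hxn.le,
      min_eq_left hn2x, max_eq_left (by linarith)]
    ring
  · rcases le_or_gt (n : ℝ) (2 * x) with hc2 | hc2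
    · rw [flen, if_neg (by rintro ⟨_, h'⟩; linarith), if_pos ⟨hc1, hc2⟩,
        min_eq_left hn2x, min_eq_right hc1, max_eq_left hc2,
        max_eq_right (by linarith : x ≤ x + h)]
      ring
    · rw [flen, if_neg (by rintro ⟨_, h'⟩; linarith),
        if_neg (by rintro ⟨_, h'⟩; linarith), if_pos ⟨hc2, hn2x⟩,
        min_eq_left hn2x, min_eq_right (by linarith : x + h ≤ (n : ℝ)),
        max_eq_right (by linarith : 2 * x ≤ (n : ℝ)),
        max_eq_right (by linarith : x ≤ x + h)]
      ring
end

section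
/- There is a constant A > 0 such that for every integer k ≥ 2, Σ_{p | k} 1/√p ≤ A·√(log k)/(log log 3k), where the sum is over primes p dividing k. -/
open Finset ArithmeticFunction

set_option maxHeartbeats 1000000

noncomputable def sprS (n : ℕ) : ℝ :=
  ∑ p ∈ Finset.filter Nat.Prime (Finset.range (n + 1)), 1 / Real.sqrt p

lemma sum_one_div_sqrt_le (n : ℕ) :
    ∑ j ∈ Finset.range (n + 1), 1 / Real.sqrt j ≤ 2 * Real.sqrt n := by
  induction n with
  | zero => simp
  | succ n ih =>
    rw [Finset.sum_range_succ]
    have hb : 0 < Real.sqrt ((n : ℝ) + 1) := Real.sqrt_pos.2 (by positivity)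
    have hsq : Real.sqrt ((n : ℝ) + 1) ^ 2 = (n : ℝ) + 1 := Real.sq_sqrt (by positivity)
    have hsqa : Real.sqrt (n : ℝ) ^ 2 = (n : ℝ) := Real.sq_sqrt n.cast_nonneg
    have ha : 0 ≤ Real.sqrt (n : ℝ) := Real.sqrt_nonneg _
    have key : 1 / Real.sqrt ((n : ℝ) + 1) ≤
        2 * (Real.sqrt ((n : ℝ) + 1) - Real.sqrt (n : ℝ)) := by
      rw [div_le_iff₀ hb]
      nlinarith [sq_nonneg (Real.sqrt ((n : ℝ) + 1) - Real.sqrt (n : ℝ))]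
    push_cast
    push_cast at ih
    linarith

lemma sprS_nonneg (n : ℕ) : 0 ≤ sprS n := by
  unfold sprS; positivity

lemma sprS_le_triv (n : ℕ) : sprS n ≤ 2 * Real.sqrt n := by
  refine le_trans ?_ (sum_one_div_sqrt_le n)
  exact Finset.sum_le_sum_of_subset_of_nonneg (Finset.filter_subset _ _)
    (fun i _ _ => by positivity)

lemma cheb (n : ℕ) :
    ∑ p ∈ Finset.filter Nat.Prime (Finset.range (n + 1)), Real.log p ≤ n * Real.log 4 := by
  have h1 : primorial n ≤ 4 ^ n := primorial_le_4_pow n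
  have hcast : ((primorial n : ℕ) : ℝ) =
      ∏ p ∈ Finset.filter Nat.Prime (Finset.range (n + 1)), (p : ℝ) := by
    rw [primorial]; push_cast; rfl
  have h2 : Real.log (primorial n) ≤ Real.log ((4 : ℝ) ^ n) := by
    apply Real.log_le_log (by exact_mod_cast (primorial_pos n))
    exact_mod_cast h1
  rw [Real.log_pow] at h2
  rw [hcast, Real.log_prod] at h2
  · exact h2
  · intro p hp
    simp only [Finset.mem_filter] at hp
    exact_mod_cast hp.2.pos.ne'

lemma le_of_sq_le_sq' {a b : ℝ} (hb : 0 ≤ b) (h : a ^ 2 ≤ b ^ 2) (ha : 0 ≤ a) : a ≤ b := by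
  by_contra hc
  push_neg at hc
  have := pow_lt_pow_left₀ hc hb (n := 2) two_ne_zero
  linarith

lemma sprS_bound (n : ℕ) : 2 ≤ n → sprS n ≤ 100 * Real.sqrt n / Real.log n := by
  induction n using Nat.strong_induction_on with
  | _ n ih =>
    intro h2n
    have hn1 : (1 : ℝ) < n := by exact_mod_cast h2n
    have hln_pos : 0 < Real.log n := Real.log_pos hn1
    have hbn : 0 < Real.sqrt (n : ℝ) := Real.sqrt_pos.2 (by positivity)
    by_cases hsmall : n < 2 ^ 21
    · -- trivial bound suffices
      have hln_le : Real.log n ≤ 50 := by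
        have h1 : Real.log n ≤ Real.log ((2 : ℝ) ^ 21) := by
          apply Real.log_le_log (by positivity)
          exact_mod_cast hsmall.le
        rw [Real.log_pow] at h1
        norm_num at h1
        have := Real.log_two_lt_d9
        nlinarith
      calc sprS n ≤ 2 * Real.sqrt n := sprS_le_triv n
        _ ≤ 100 * Real.sqrt n / Real.log n := by
            rw [le_div_iff₀ hln_pos]
            nlinarith [hbn.le]
    · push_neg at hsmall
      set m := n / 2 with hm
      have hm2 : 2 ≤ m := by omega
      have hmn : m < n := by omega
      have ihm := ih m hmn hm2
      have hm1 : (1 : ℝ) < m := by exact_mod_cast hm2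
      have hlm_pos : 0 < Real.log m := Real.log_pos hm1
      have ha : 0 < Real.sqrt (m : ℝ) := Real.sqrt_pos.2 (by positivity)
      have ha2 : Real.sqrt (m : ℝ) ^ 2 = (m : ℝ) := Real.sq_sqrt (by positivity)
      have hb2 : Real.sqrt (n : ℝ) ^ 2 = (n : ℝ) := Real.sq_sqrt (by positivity)
      have h2m : (m : ℝ) * 2 ≤ (n : ℝ) := by
        have : m * 2 ≤ n := by omega
        exact_mod_cast this
      have h4m : (n : ℝ) ≤ 4 * m := by
        have : n ≤ 4 * m := by omega
        exact_mod_cast this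
      have hlog4 : Real.log 4 ≤ 1.4 := by
        have h4 : (4 : ℝ) = 2 ^ 2 := by norm_num
        rw [h4, Real.log_pow]
        have := Real.log_two_lt_d9
        nlinarith
      have hlog4_pos : 0 < Real.log 4 := Real.log_pos (by norm_num)
      have hlm_ge : Real.log n - Real.log 4 ≤ Real.log m := by
        have h1 : Real.log n ≤ Real.log (4 * m) := by
          apply Real.log_le_log (by positivity) h4m
        rw [Real.log_mul (by norm_num) (by positivity)] at h1
        linarith
      have hln_ge : (14.5 : ℝ) ≤ Real.log n := by
        have h1 : Real.log ((2 : ℝ) ^ 21) ≤ Real.log n := by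
          apply Real.log_le_log (by positivity)
          exact_mod_cast hsmall
        rw [Real.log_pow] at h1
        norm_num at h1
        have := Real.log_two_gt_d9
        nlinarith
      have hlm_le : Real.log m ≤ Real.log n := by
        apply Real.log_le_log (by positivity)
        exact_mod_cast hmn.le
      -- split the sum
      have hsplit : Finset.filter Nat.Prime (Finset.range (n + 1)) =
          Finset.filter Nat.Prime (Finset.range (m + 1)) ∪
            Finset.filter Nat.Prime (Finset.Ioc m n) := by
        ext p
        simp only [Finset.mem_filter, Finset.mem_union, Finset.mem_range, Finset.mem_Ioc]
        constructor
        · rintro ⟨h1, h2⟩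
          rcases lt_or_ge p (m + 1) with h | h
          · exact Or.inl ⟨h, h2⟩
          · exact Or.inr ⟨⟨by omega, by omega⟩, h2⟩
        · rintro (⟨h1, h2⟩ | ⟨⟨h1, h1'⟩, h2⟩) <;> exact ⟨by omega, h2⟩
      have hdisj : Disjoint (Finset.filter Nat.Prime (Finset.range (m + 1)))
          (Finset.filter Nat.Prime (Finset.Ioc m n)) := by
        rw [Finset.disjoint_left]
        intro p hp hq
        simp only [Finset.mem_filter, Finset.mem_range, Finset.mem_Ioc] at hp hq
        omega
      have hsum : sprS n = sprS m +
          ∑ p ∈ Finset.filter Nat.Prime (Finset.Ioc m n), 1 / Real.sqrt p := by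
        rw [sprS, hsplit, Finset.sum_union hdisj]; rfl
      -- tail bound
      have htail : ∑ p ∈ Finset.filter Nat.Prime (Finset.Ioc m n), 1 / Real.sqrt p ≤
          (n * Real.log 4) / (Real.sqrt m * Real.log m) := by
        have hpt : ∀ p ∈ Finset.filter Nat.Prime (Finset.Ioc m n),
            1 / Real.sqrt p ≤ Real.log p / (Real.sqrt m * Real.log m) := by
          intro p hp
          simp only [Finset.mem_filter, Finset.mem_Ioc] at hp
          have hpm : (m : ℝ) ≤ (p : ℝ) := by exact_mod_cast hp.1.1.le
          have hps : 0 < Real.sqrt (p : ℝ) := Real.sqrt_pos.2 (by exact_mod_cast hp.2.pos)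
          have hplog : 0 < Real.log p := Real.log_pos (by exact_mod_cast lt_of_lt_of_le hm2 hp.1.1.le)
          rw [div_le_div_iff₀ hps (mul_pos ha hlm_pos), one_mul]
          have h1 : Real.sqrt (m : ℝ) ≤ Real.sqrt (p : ℝ) := Real.sqrt_le_sqrt hpm
          have h2 : Real.log m ≤ Real.log p := Real.log_le_log (by positivity) hpm
          nlinarith
        calc ∑ p ∈ Finset.filter Nat.Prime (Finset.Ioc m n), 1 / Real.sqrt p
            ≤ ∑ p ∈ Finset.filter Nat.Prime (Finset.Ioc m n),
                Real.log p / (Real.sqrt m * Real.log m) := Finset.sum_le_sum hpt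
          _ = (∑ p ∈ Finset.filter Nat.Prime (Finset.Ioc m n), Real.log p) /
                (Real.sqrt m * Real.log m) := by rw [Finset.sum_div]
          _ ≤ (n * Real.log 4) / (Real.sqrt m * Real.log m) := by
              have hnum : (∑ p ∈ Finset.filter Nat.Prime (Finset.Ioc m n), Real.log p) ≤
                  (n : ℝ) * Real.log 4 := by
                refine le_trans ?_ (cheb n)
                apply Finset.sum_le_sum_of_subset_of_nonneg
                · apply Finset.filter_subset_filter
                  intro p hp
                  simp only [Finset.mem_Ioc] at hp
                  simp only [Finset.mem_range]
                  omega
                · intro p hp _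
                  simp only [Finset.mem_filter] at hp
                  have : (1 : ℝ) ≤ p := by exact_mod_cast hp.2.one_lt.le
                  exact Real.log_nonneg this
              gcongr
      -- final arithmetic
      have hab : 100 * Real.sqrt (m : ℝ) ≤ 81 * Real.sqrt (n : ℝ) := by
        apply le_of_sq_le_sq' (by positivity) ?_ (by positivity)
        rw [mul_pow, mul_pow, ha2, hb2]
        linarith
      have hba : Real.sqrt (n : ℝ) ≤ 2 * Real.sqrt (m : ℝ) := by
        apply le_of_sq_le_sq' (by positivity) ?_ (by positivity)
        rw [mul_pow, ha2, hb2]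
        linarith
      have hlm' : 9 * Real.log n ≤ 10 * Real.log m := by linarith
      have h1 : 100 * Real.sqrt m / Real.log m ≤ 90 * Real.sqrt n / Real.log n := by
        rw [div_le_div_iff₀ hlm_pos hln_pos]
        nlinarith [mul_le_mul_of_nonneg_right hab hln_pos.le,
          mul_nonneg hbn.le (by linarith : (0:ℝ) ≤ 10 * Real.log m - 9 * Real.log n)]
      have hnn : (n : ℝ) = Real.sqrt n * Real.sqrt n := (Real.mul_self_sqrt (by positivity)).symm
      have htail' : ∑ p ∈ Finset.filter Nat.Prime (Finset.Ioc m n), 1 / Real.sqrt p ≤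
          (Real.sqrt n * Real.sqrt n * Real.log 4) / (Real.sqrt m * Real.log m) := by
        rw [← hnn]; exact htail
      have h2 : (Real.sqrt n * Real.sqrt n * Real.log 4) / (Real.sqrt m * Real.log m) ≤
          10 * Real.sqrt n / Real.log n := by
        rw [div_le_div_iff₀ (mul_pos ha hlm_pos) hln_pos]
        have hint1 : 0 ≤ (2 * Real.sqrt m - Real.sqrt n) * (Real.sqrt n * Real.log m) := by
          apply mul_nonneg (by linarith) (mul_nonneg hbn.le hlm_pos.le)
        have hint2 : 0 ≤ (10 * Real.log m - 9 * Real.log n) * (Real.sqrt n * Real.sqrt n) := by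
          apply mul_nonneg (by linarith) (mul_nonneg hbn.le hbn.le)
        have hint3 : 0 ≤ (1.4 - Real.log 4) * (Real.sqrt n * Real.sqrt n * Real.log n) := by
          apply mul_nonneg (by linarith) (mul_nonneg (mul_nonneg hbn.le hbn.le) hln_pos.le)
        have hint4 : 0 ≤ Real.sqrt n * Real.sqrt n * Real.log n :=
          mul_nonneg (mul_nonneg hbn.le hbn.le) hln_pos.le
        linarith [hint1, hint2, hint3, hint4]
      rw [hsum]
      calc sprS m + ∑ p ∈ Finset.filter Nat.Prime (Finset.Ioc m n), 1 / Real.sqrt p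
          ≤ 100 * Real.sqrt m / Real.log m +
              (Real.sqrt n * Real.sqrt n * Real.log 4) / (Real.sqrt m * Real.log m) := by
            linarith [ihm, htail']
        _ ≤ 90 * Real.sqrt n / Real.log n + 10 * Real.sqrt n / Real.log n := by linarith
        _ = 100 * Real.sqrt n / Real.log n := by ring

theorem lemma4_inv_sqrt_prime_bound :
    ∃ A : ℝ, 0 < A ∧ ∀ k : ℕ, 2 ≤ k →
      (∑ p ∈ k.primeFactors, 1 / Real.sqrt p)
        ≤ A * Real.sqrt (Real.log k) / Real.log (Real.log (3 * k)) := by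
  refine ⟨500, by norm_num, ?_⟩
  intro k hk
  have hk1 : (1 : ℝ) < k := by exact_mod_cast hk
  have hL_pos : 0 < Real.log k := Real.log_pos hk1
  have h3k : (6 : ℝ) ≤ 3 * (k : ℝ) := by
    have : (2 : ℝ) ≤ (k : ℝ) := by exact_mod_cast hk
    linarith
  have hlog3k_gt1 : 1 < Real.log (3 * (k : ℝ)) := by
    have h1 : Real.log 4 ≤ Real.log (3 * (k : ℝ)) := Real.log_le_log (by norm_num) (by linarith)
    have h4 : (4 : ℝ) = 2 ^ 2 := by norm_num
    rw [h4, Real.log_pow] at h1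
    norm_num at h1
    have := Real.log_two_gt_d9
    nlinarith
  have hell_pos : 0 < Real.log (Real.log (3 * (k : ℝ))) := Real.log_pos hlog3k_gt1
  have hsqrtL : (0.83 : ℝ) ≤ Real.sqrt (Real.log k) := by
    have h1 : Real.log 2 ≤ Real.log k := Real.log_le_log (by norm_num) (by exact_mod_cast hk)
    have h2 := Real.log_two_gt_d9
    have h3 : Real.sqrt ((0.83 : ℝ) ^ 2) ≤ Real.sqrt (Real.log k) := by
      apply Real.sqrt_le_sqrt; nlinarith
    rwa [Real.sqrt_sq (by norm_num)] at h3
  have hlhs_le_spr : (∑ p ∈ k.primeFactors, 1 / Real.sqrt p) ≤ sprS k := by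
    apply Finset.sum_le_sum_of_subset_of_nonneg
    · intro p hp
      rw [Nat.mem_primeFactors] at hp
      simp only [Finset.mem_filter, Finset.mem_range]
      exact ⟨by have := Nat.le_of_dvd (by omega) hp.2.1; omega, hp.1⟩
    · intro p _ _; positivity
  by_cases hks : k < 128
  · -- small case
    have h24 : (∑ p ∈ k.primeFactors, 1 / Real.sqrt p) ≤ 24 := by
      refine le_trans hlhs_le_spr (le_trans (sprS_le_triv k) ?_)
      have h1 : Real.sqrt (k : ℝ) ≤ Real.sqrt 144 := by
        apply Real.sqrt_le_sqrt
        have hx : k ≤ 127 := by omega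
        have : (k : ℝ) ≤ 127 := by exact_mod_cast hx
        linarith
      rw [show (144 : ℝ) = 12 ^ 2 by norm_num, Real.sqrt_sq (by norm_num)] at h1
      linarith
    have hell_le : Real.log (Real.log (3 * (k : ℝ))) ≤ 2.09 := by
      have h1 : Real.log (3 * (k : ℝ)) ≤ Real.log ((2 : ℝ) ^ 9) := by
        apply Real.log_le_log (by linarith)
        have hx : k ≤ 127 := by omega
        have : (k : ℝ) ≤ 127 := by exact_mod_cast hx
        norm_num
        linarith
      rw [Real.log_pow] at h1
      norm_num at h1
      have hl2 := Real.log_two_lt_d9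
      have h2 := Real.log_le_log (show (0:ℝ) < Real.log (3 * (k : ℝ)) by linarith)
        (show Real.log (3 * (k : ℝ)) ≤ (2:ℝ) ^ 3 by norm_num; nlinarith)
      rw [Real.log_pow] at h2
      norm_num at h2
      linarith
    calc (∑ p ∈ k.primeFactors, 1 / Real.sqrt p) ≤ 24 := h24
      _ ≤ 500 * Real.sqrt (Real.log k) / Real.log (Real.log (3 * (k : ℝ))) := by
          rw [le_div_iff₀ hell_pos]
          nlinarith [hsqrtL, hell_le, hell_pos]
  · push_neg at hks
    have hl2g := Real.log_two_gt_d9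
    have hl2l := Real.log_two_lt_d9
    have hL : 7 * Real.log 2 ≤ Real.log k := by
      have hx : (128 : ℝ) ≤ (k : ℝ) := by exact_mod_cast hks
      have h1 : Real.log ((2:ℝ)^7) ≤ Real.log k := Real.log_le_log (by positivity) (by norm_num; linarith)
      rw [Real.log_pow] at h1
      norm_num at h1
      exact h1
    have hL485 : (4.85:ℝ) ≤ Real.log k := by nlinarith
    set P := ⌊Real.log k⌋₊ with hPdef
    have hP4 : 4 ≤ P := Nat.le_floor (by push_cast; linarith)
    have hP2 : 2 ≤ P := by omega
    have hPL : (P:ℝ) ≤ Real.log k := Nat.floor_le hL_pos.le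
    have hLP1 : Real.log k < (P:ℝ) + 1 := Nat.lt_floor_add_one _
    have hPhalf : Real.log k / 2 ≤ (P:ℝ) := by linarith
    have hP1 : (1:ℝ) < (P:ℝ) := by exact_mod_cast (by omega : 1 < P)
    have hlogP_pos : 0 < Real.log P := Real.log_pos hP1
    have hlogL_pos : 0 < Real.log (Real.log k) := Real.log_pos (by linarith)
    have hsL_pos : 0 < Real.sqrt (Real.log k) := Real.sqrt_pos.2 hL_pos
    have hlogP_le : Real.log P ≤ Real.log (Real.log k) := Real.log_le_log (by linarith) hPL
    have hlogP_ge : Real.log (Real.log k) - Real.log 2 ≤ Real.log P := by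
      have h1 := Real.log_le_log (show (0:ℝ) < Real.log k / 2 by linarith) hPhalf
      rw [Real.log_div (ne_of_gt hL_pos) (by norm_num)] at h1
      linarith
    have hlogL_ge : (1.38:ℝ) ≤ Real.log (Real.log k) := by
      have h1 : Real.log ((2:ℝ)^2) ≤ Real.log (Real.log k) := Real.log_le_log (by positivity) (by norm_num; linarith)
      rw [Real.log_pow] at h1
      norm_num at h1
      nlinarith
    have hsP_le : Real.sqrt P ≤ Real.sqrt (Real.log k) := Real.sqrt_le_sqrt hPL
    have hsP_pos : 0 < Real.sqrt (P:ℝ) := Real.sqrt_pos.2 (by linarith)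
    -- bound on the double log of 3k
    have hlog3 : Real.log 3 ≤ 1.39 := by
      have h1 : Real.log 3 ≤ Real.log ((2:ℝ)^2) := Real.log_le_log (by norm_num) (by norm_num)
      rw [Real.log_pow] at h1
      norm_num at h1
      nlinarith
    have hell_le : Real.log (Real.log (3 * (k:ℝ))) ≤ Real.log (Real.log k) + 0.29 := by
      have hlog3k_eq : Real.log (3*(k:ℝ)) = Real.log 3 + Real.log k :=
        Real.log_mul (by norm_num) (by positivity)
      have h1 : Real.log (3*(k:ℝ)) ≤ 1.29 * Real.log k := by
        rw [hlog3k_eq]; linarith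
      have h2 : Real.log (Real.log (3*(k:ℝ))) ≤ Real.log (1.29 * Real.log k) :=
        Real.log_le_log (by linarith) h1
      rw [Real.log_mul (by norm_num) (ne_of_gt hL_pos)] at h2
      have h3 : Real.log (1.29:ℝ) ≤ 0.29 := by
        have := Real.log_le_sub_one_of_pos (show (0:ℝ) < 1.29 by norm_num)
        linarith
      linarith
    -- split the sum
    rw [← Finset.sum_filter_add_sum_filter_not k.primeFactors (fun p => p ≤ P)
      (fun p => 1 / Real.sqrt p)]
    -- head bound
    have hhead : ∑ p ∈ k.primeFactors.filter (fun p => p ≤ P), 1 / Real.sqrt p ≤ sprS P := by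
      apply Finset.sum_le_sum_of_subset_of_nonneg
      · intro p hp
        simp only [Finset.mem_filter, Finset.mem_range] at hp ⊢
        rw [Nat.mem_primeFactors] at hp
        exact ⟨by omega, hp.1.1⟩
      · intro p _ _; positivity
    have hheadb := sprS_bound P hP2
    -- tail bound
    have hsumlog : ∑ p ∈ k.primeFactors, Real.log p ≤ Real.log k := by
      have hd : (∏ p ∈ k.primeFactors, p) ∣ k := Nat.prod_primeFactors_dvd k
      have hle : (∏ p ∈ k.primeFactors, p) ≤ k := Nat.le_of_dvd (by omega) hd
      have hpos : ∀ p ∈ k.primeFactors, ((p:ℝ)) ≠ 0 := by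
        intro p hp
        rw [Nat.mem_primeFactors] at hp
        exact_mod_cast hp.1.pos.ne'
      have h1 : Real.log (∏ p ∈ k.primeFactors, (p:ℝ)) ≤ Real.log k := by
        apply Real.log_le_log
        · apply Finset.prod_pos
          intro p hp
          rw [Nat.mem_primeFactors] at hp
          exact_mod_cast hp.1.pos
        · rw [← Nat.cast_prod]
          exact Nat.cast_le.mpr hle
      rwa [Real.log_prod hpos] at h1
    have htail : ∑ p ∈ k.primeFactors.filter (fun p => ¬ p ≤ P), 1 / Real.sqrt p ≤
        Real.log k / (Real.sqrt (Real.log k) * Real.log (Real.log k)) := by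
      have hpt : ∀ p ∈ k.primeFactors.filter (fun p => ¬ p ≤ P),
          1 / Real.sqrt p ≤ Real.log p / (Real.sqrt (Real.log k) * Real.log (Real.log k)) := by
        intro p hp
        simp only [Finset.mem_filter, not_le] at hp
        rw [Nat.mem_primeFactors] at hp
        have hpP : P + 1 ≤ p := hp.2
        have hpL : Real.log k ≤ (p:ℝ) := by
          have : ((P:ℝ) + 1) ≤ (p:ℝ) := by exact_mod_cast hpP
          linarith
        have hps : 0 < Real.sqrt (p:ℝ) := Real.sqrt_pos.2 (by linarith)
        rw [div_le_div_iff₀ hps (mul_pos hsL_pos hlogL_pos), one_mul]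
        have h1 : Real.sqrt (Real.log k) ≤ Real.sqrt (p:ℝ) := Real.sqrt_le_sqrt hpL
        have h2 : Real.log (Real.log k) ≤ Real.log p := Real.log_le_log (by linarith) hpL
        nlinarith
      calc ∑ p ∈ k.primeFactors.filter (fun p => ¬ p ≤ P), 1 / Real.sqrt p
          ≤ ∑ p ∈ k.primeFactors.filter (fun p => ¬ p ≤ P),
              Real.log p / (Real.sqrt (Real.log k) * Real.log (Real.log k)) :=
            Finset.sum_le_sum hpt
        _ = (∑ p ∈ k.primeFactors.filter (fun p => ¬ p ≤ P), Real.log p) /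
              (Real.sqrt (Real.log k) * Real.log (Real.log k)) := by rw [Finset.sum_div]
        _ ≤ Real.log k / (Real.sqrt (Real.log k) * Real.log (Real.log k)) := by
            have hnum : (∑ p ∈ k.primeFactors.filter (fun p => ¬ p ≤ P), Real.log p) ≤
                Real.log k := by
              refine le_trans ?_ hsumlog
              apply Finset.sum_le_sum_of_subset_of_nonneg (Finset.filter_subset _ _)
              intro p hp _
              rw [Nat.mem_primeFactors] at hp
              exact Real.log_nonneg (by exact_mod_cast hp.1.one_lt.le)
            gcongr
    have htail' : ∑ p ∈ k.primeFactors.filter (fun p => ¬ p ≤ P), 1 / Real.sqrt p ≤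
        Real.sqrt (Real.log k) / Real.log (Real.log k) := by
      refine htail.trans (le_of_eq ?_)
      have hms : Real.sqrt (Real.log k) * Real.sqrt (Real.log k) = Real.log k :=
        Real.mul_self_sqrt hL_pos.le
      rw [div_eq_div_iff (mul_pos hsL_pos hlogL_pos).ne' (ne_of_gt hlogL_pos)]
      linear_combination (-(Real.log (Real.log (k:ℝ)))) * hms
    -- final arithmetic
    have t1 : 100 * Real.sqrt P / Real.log P ≤
        220 * Real.sqrt (Real.log k) / Real.log (Real.log k) := by
      rw [div_le_div_iff₀ hlogP_pos hlogL_pos]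
      have e1 : 0 ≤ (Real.sqrt (Real.log k) - Real.sqrt P) * Real.log (Real.log k) :=
        mul_nonneg (by linarith) hlogL_pos.le
      have e2 : 0 ≤ Real.sqrt (Real.log k) *
          (Real.log P - (Real.log (Real.log k) - Real.log 2)) :=
        mul_nonneg hsL_pos.le (by linarith)
      have e3 : 0 ≤ Real.sqrt (Real.log k) * (Real.log (Real.log k) - 1.3) :=
        mul_nonneg hsL_pos.le (by linarith)
      have e4 : 0 ≤ Real.sqrt (Real.log k) * (0.694 - Real.log 2) :=
        mul_nonneg hsL_pos.le (by linarith)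
      linarith [e1, e2, e3, e4, hsL_pos.le]
    calc (∑ p ∈ k.primeFactors.filter (fun p => p ≤ P), 1 / Real.sqrt p) +
          ∑ p ∈ k.primeFactors.filter (fun p => ¬ p ≤ P), 1 / Real.sqrt p
        ≤ 220 * Real.sqrt (Real.log k) / Real.log (Real.log k) +
            Real.sqrt (Real.log k) / Real.log (Real.log k) := by
          have := hhead.trans (hheadb.trans t1)
          linarith [htail']
      _ = 221 * Real.sqrt (Real.log k) / Real.log (Real.log k) := by ring
      _ ≤ 500 * Real.sqrt (Real.log k) / Real.log (Real.log (3 * (k:ℝ))) := by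
          rw [div_le_div_iff₀ hlogL_pos hell_pos]
          have e1 : 0 ≤ Real.sqrt (Real.log k) *
              (Real.log (Real.log k) + 0.29 - Real.log (Real.log (3 * (k:ℝ)))) :=
            mul_nonneg hsL_pos.le (by linarith)
          have e2 : 0 ≤ Real.sqrt (Real.log k) * (Real.log (Real.log k) - 1.3) :=
            mul_nonneg hsL_pos.le (by linarith)
          linarith [e1, e2, hsL_pos.le]
end

section
/- For every positive integer k, Σ_{ℓ | k} (μ²(ℓ)/φ(ℓ))·log ℓ = (k/φ(k))·v(k). -/
open Finset ArithmeticFunction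

private lemma aux_powerset_sum (a L : ℕ → ℝ) (P : Finset ℕ) :
    ∑ S ∈ P.powerset, (∏ p ∈ S, a p) * (∑ p ∈ S, L p)
      = ∑ p ∈ P, L p * a p * ∏ q ∈ P.erase p, (1 + a q) := by
  classical
  induction P using Finset.induction_on with
  | empty => simp
  | insert x P hx ih =>
    rw [Finset.sum_powerset_insert hx]
    have hprod : ∑ S ∈ P.powerset, ∏ p ∈ S, a p = ∏ q ∈ P, (1 + a q) := by
      have := Finset.prod_add a (fun _ => (1:ℝ)) P
      simp only [Finset.prod_const_one, mul_one] at this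
      rw [← this]
      exact Finset.prod_congr rfl fun q _ => (add_comm (a q) 1)
    have h2 : ∑ S ∈ P.powerset, (∏ p ∈ insert x S, a p) * (∑ p ∈ insert x S, L p)
        = a x * (∑ S ∈ P.powerset, (∏ p ∈ S, a p) * (∑ p ∈ S, L p))
          + L x * a x * ∏ q ∈ P, (1 + a q) := by
      rw [← hprod, Finset.mul_sum, Finset.mul_sum, ← Finset.sum_add_distrib]
      refine Finset.sum_congr rfl fun S hS => ?_
      have hxS : x ∉ S := fun h => hx (Finset.mem_powerset.mp hS h)
      rw [Finset.prod_insert hxS, Finset.sum_insert hxS]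
      ring
    rw [h2, ih, Finset.sum_insert hx, Finset.erase_insert hx, Finset.mul_sum]
    have key : ∑ p ∈ P, (L p * a p * ∏ q ∈ P.erase p, (1 + a q)
          + a x * (L p * a p * ∏ q ∈ P.erase p, (1 + a q)))
        = ∑ p ∈ P, L p * a p * ∏ q ∈ (insert x P).erase p, (1 + a q) := by
      refine Finset.sum_congr rfl fun p hp => ?_
      rw [Finset.erase_insert_of_ne (by rintro rfl; exact hx hp)]
      rw [Finset.prod_insert (fun h => hx (Finset.erase_subset _ _ h))]
      ring
    rw [Finset.sum_add_distrib] at key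
    linarith [key]


private lemma aux_prod_primes (S : Finset ℕ) (h : ∀ p ∈ S, p.Prime) :
    Squarefree (∏ p ∈ S, p) ∧ (∏ p ∈ S, p).totient = ∏ p ∈ S, (p - 1) := by
  classical
  induction S using Finset.induction_on with
  | empty => simp
  | insert x S hx ih =>
    have hxp : x.Prime := h x (Finset.mem_insert_self _ _)
    have hS : ∀ p ∈ S, p.Prime := fun p hp => h p (Finset.mem_insert_of_mem hp)
    have hcop : Nat.Coprime x (∏ p ∈ S, p) := by
      rw [Nat.coprime_prod_right_iff]
      intro q hq
      exact (Nat.coprime_primes hxp (hS q hq)).mpr (by rintro rfl; exact hx hq)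
    obtain ⟨ihs, iht⟩ := ih hS
    constructor
    · rw [Finset.prod_insert hx]
      exact (Nat.squarefree_mul hcop).mpr ⟨hxp.squarefree, ihs⟩
    · rw [Finset.prod_insert hx, Finset.prod_insert hx, Nat.totient_mul hcop, iht,
        Nat.totient_prime hxp]


theorem lemma5_divisor_log_identity (k : ℕ) (hk : 1 ≤ k) :
    (∑ ℓ ∈ k.divisors,
        ((ArithmeticFunction.moebius ℓ : ℝ) ^ 2 / (ℓ.totient : ℝ)) * Real.log ℓ)
      = ((k : ℝ) / (k.totient : ℝ)) * vGY k := by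

  classical
  have hk0 : k ≠ 0 := by omega
  set P := k.primeFactors with hP
  have hprime : ∀ p ∈ P, p.Prime := fun p hp => Nat.prime_of_mem_primeFactors hp
  -- restrict to squarefree divisors
  have hA : (∑ ℓ ∈ k.divisors,
        ((ArithmeticFunction.moebius ℓ : ℝ) ^ 2 / (ℓ.totient : ℝ)) * Real.log ℓ)
      = ∑ ℓ ∈ k.divisors with Squarefree ℓ,
        ((ArithmeticFunction.moebius ℓ : ℝ) ^ 2 / (ℓ.totient : ℝ)) * Real.log ℓ := by
    rw [Finset.sum_filter_of_ne]
    intro ℓ _ h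
    by_contra hsq
    simp [ArithmeticFunction.moebius_eq_zero_of_not_squarefree hsq] at h
  rw [hA, Nat.sum_divisors_filter_squarefree hk0]
  have hPF : (UniqueFactorizationMonoid.normalizedFactors k).toFinset = P := by
    rw [Nat.factors_eq]; rfl
  rw [hPF]
  -- identify each term
  have hterm : ∀ S ∈ P.powerset,
      ((ArithmeticFunction.moebius S.val.prod : ℝ) ^ 2 / ((S.val.prod).totient : ℝ))
          * Real.log S.val.prod
        = (∏ p ∈ S, ((p : ℝ) - 1)⁻¹) * (∑ p ∈ S, Real.log p) := by
    intro S hS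
    have hSsub : S ⊆ P := Finset.mem_powerset.mp hS
    have hSp : ∀ p ∈ S, p.Prime := fun p hp => hprime p (hSsub hp)
    have hval : S.val.prod = ∏ p ∈ S, p := by rw [Finset.prod_val]; rfl
    obtain ⟨hsf, htot⟩ := aux_prod_primes S hSp
    have hmu : ((ArithmeticFunction.moebius S.val.prod : ℝ)) ^ 2 = 1 := by
      rw [hval]
      have := ArithmeticFunction.moebius_sq_eq_one_of_squarefree hsf
      have : ((ArithmeticFunction.moebius (∏ p ∈ S, p)) ^ 2 : ℤ) = 1 := this
      exact_mod_cast congrArg (Int.cast : ℤ → ℝ) this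
    have hlog : Real.log S.val.prod = ∑ p ∈ S, Real.log p := by
      rw [hval]
      push_cast
      exact Real.log_prod (fun p hp => by
        have := (hSp p hp).two_le; positivity)
    have htotR : ((S.val.prod).totient : ℝ) = ∏ p ∈ S, ((p : ℝ) - 1) := by
      rw [hval, htot]
      push_cast [Nat.cast_prod]
      exact Finset.prod_congr rfl fun p hp => by
        have := (hSp p hp).one_lt
        push_cast [Nat.cast_sub (le_of_lt this)]
        ring
    rw [hmu, hlog, htotR, Finset.prod_inv_distrib]
    ring
  rw [Finset.sum_congr rfl hterm, aux_powerset_sum]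
  -- now evaluate the RHS sum
  have h1 : ∀ q ∈ P, (0 : ℝ) < (q : ℝ) - 1 := fun q hq => by
    have := (hprime q hq).one_lt
    have : (1 : ℝ) < q := by exact_mod_cast this
    linarith
  have h0 : ∀ q ∈ P, (0 : ℝ) < (q : ℝ) := fun q hq => by
    have := (hprime q hq).pos; exact_mod_cast this
  have hquot : ((k : ℝ) / (k.totient : ℝ)) = ∏ q ∈ P, (q : ℝ) / ((q : ℝ) - 1) := by
    have hcast : (k.totient : ℝ) * ∏ q ∈ P, (q : ℝ) = (k : ℝ) * ∏ q ∈ P, ((q : ℝ) - 1) := by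
      have h := congrArg (Nat.cast : ℕ → ℝ) (Nat.totient_mul_prod_primeFactors k)
      push_cast at h
      rw [h]
      congr 1
      exact Finset.prod_congr rfl fun q hq => by
        have := (hprime q hq).one_lt
        push_cast [Nat.cast_sub (le_of_lt this)]
        ring
    have htpos : (0 : ℝ) < (k.totient : ℝ) := by
      exact_mod_cast Nat.totient_pos.mpr (by omega)
    have hp1 : (0 : ℝ) < ∏ q ∈ P, ((q : ℝ) - 1) := Finset.prod_pos h1
    rw [Finset.prod_div_distrib, div_eq_div_iff (ne_of_gt htpos) (ne_of_gt hp1)]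
    linarith [hcast]
  have hfin : ∀ p ∈ P, Real.log p * ((p : ℝ) - 1)⁻¹ * ∏ q ∈ P.erase p, (1 + ((q : ℝ) - 1)⁻¹)
      = ((k : ℝ) / (k.totient : ℝ)) * (Real.log p / (p : ℝ)) := by
    intro p hp
    have herase : ∏ q ∈ P.erase p, (1 + ((q : ℝ) - 1)⁻¹)
        = ∏ q ∈ P.erase p, (q : ℝ) / ((q : ℝ) - 1) := by
      refine Finset.prod_congr rfl fun q hq => ?_
      have hq1 := h1 q (Finset.mem_of_mem_erase hq)
      field_simp
      ring
    have hmul : ((k : ℝ) / (k.totient : ℝ))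
        = ((p : ℝ) / ((p : ℝ) - 1)) * ∏ q ∈ P.erase p, (q : ℝ) / ((q : ℝ) - 1) := by
      rw [hquot, ← Finset.mul_prod_erase _ _ hp]
    have hp1 := h1 p hp
    have hp0 := h0 p hp
    have hc : ((p:ℝ)/((p:ℝ)-1)) * (Real.log p / p) = Real.log p * ((p:ℝ)-1)⁻¹ := by
      field_simp
    rw [herase, hmul, mul_right_comm ((p:ℝ)/((p:ℝ)-1)) _ (Real.log p / (p:ℝ)), hc]
  rw [Finset.sum_congr rfl hfin, ← Finset.mul_sum]
  rfl
end

section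
/- For every squarefree positive integer r and every positive integer k, Σ_{d | r, gcd(d,k) = 1} d·μ(d)/φ(d) = (μ(r)/φ(r))·μ(gcd(r,k))·φ(gcd(r,k)). -/
open Finset ArithmeticFunction

noncomputable def fQuot : ArithmeticFunction ℝ := ⟨fun n => (n : ℝ) / (n.totient : ℝ), by simp⟩

lemma fQuot_mult : fQuot.IsMultiplicative := by
  refine ⟨by simp [fQuot], fun {m n} h => ?_⟩
  show ((m*n : ℕ) : ℝ) / ((m*n).totient : ℝ) = (m:ℝ)/(m.totient:ℝ) * ((n:ℝ)/(n.totient:ℝ))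
  rw [Nat.totient_mul h]
  push_cast
  rw [div_mul_div_comm]

lemma sum_div_eq (m : ℕ) (hm : Squarefree m) :
    ∑ d ∈ m.divisors, (d : ℝ) * (ArithmeticFunction.moebius d : ℝ) / (d.totient : ℝ)
      = (ArithmeticFunction.moebius m : ℝ) / (m.totient : ℝ) := by
  have h := ArithmeticFunction.IsMultiplicative.prodPrimeFactors_one_sub_of_squarefree fQuot fQuot_mult hm
  have hL : ∑ d ∈ m.divisors, (d : ℝ) * (ArithmeticFunction.moebius d : ℝ) / (d.totient : ℝ)
      = ∑ d ∈ m.divisors, ((ArithmeticFunction.moebius : ArithmeticFunction ℤ) d : ℝ) * fQuot d := by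
    apply Finset.sum_congr rfl; intro d _
    show _ = _ * ((d:ℝ)/(d.totient:ℝ))
    ring
  rw [hL, ← h]
  have hprod : ∏ p ∈ m.primeFactors, (1 - fQuot p)
      = ∏ p ∈ m.primeFactors, ((-1) * (1 / ((p:ℝ) - 1))) := by
    apply Finset.prod_congr rfl; intro p hp
    have hp' := Nat.prime_of_mem_primeFactors hp
    have h2 : (2:ℝ) ≤ (p:ℝ) := by exact_mod_cast hp'.two_le
    have hne : (p:ℝ) - 1 ≠ 0 := by linarith
    show 1 - (p:ℝ)/(p.totient:ℝ) = _
    rw [Nat.totient_prime hp']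
    have : ((p - 1 : ℕ) : ℝ) = (p:ℝ) - 1 := by
      have := hp'.two_le; push_cast [Nat.cast_sub (by omega : 1 ≤ p)]; ring
    rw [this]
    field_simp
    ring
  rw [hprod, Finset.prod_mul_distrib, Finset.prod_const]
  have hmu : (ArithmeticFunction.moebius m : ℝ) = (-1 : ℝ) ^ m.primeFactors.card := by
    rw [ArithmeticFunction.moebius_apply_of_squarefree hm,
      ← (ArithmeticFunction.cardDistinctFactors_eq_cardFactors_iff_squarefree hm.ne_zero).mpr hm]
    have : ArithmeticFunction.cardDistinctFactors m = m.primeFactors.card := by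
      rw [ArithmeticFunction.cardDistinctFactors_apply, Nat.primeFactors,
        List.card_toFinset]
    rw [this]
    push_cast
    ring
  have hphi : (m.totient : ℝ) = ∏ p ∈ m.primeFactors, ((p:ℝ) - 1) := by
    have h1 : m.totient * ∏ p ∈ m.primeFactors, p = m * ∏ p ∈ m.primeFactors, (p - 1) :=
      Nat.totient_mul_prod_primeFactors m
    have h2 : ∏ p ∈ m.primeFactors, p = m := Nat.prod_primeFactors_of_squarefree hm
    rw [h2] at h1
    have hm0 : m ≠ 0 := hm.ne_zero
    have h3 : m.totient = ∏ p ∈ m.primeFactors, (p - 1) := by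
      exact Nat.eq_of_mul_eq_mul_left (Nat.pos_of_ne_zero hm0) (by linarith [h1])
    rw [h3]
    push_cast
    apply Finset.prod_congr rfl
    intro p hp
    have := (Nat.prime_of_mem_primeFactors hp).two_le
    push_cast [Nat.cast_sub (by omega : 1 ≤ p)]
    ring
  rw [hmu, hphi, div_eq_mul_inv, ← Finset.prod_inv_distrib]
  congr 1
  exact Finset.prod_congr rfl fun p _ => one_div _

theorem divisor_sum_coprime_identity (r k : ℕ) (hr : Squarefree r) (hk : 1 ≤ k) :
    (∑ d ∈ r.divisors.filter (fun d => Nat.gcd d k = 1),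
        (d : ℝ) * (ArithmeticFunction.moebius d : ℝ) / (d.totient : ℝ))
      = ((ArithmeticFunction.moebius r : ℝ) / (r.totient : ℝ))
          * (ArithmeticFunction.moebius (Nat.gcd r k) : ℝ)
          * ((Nat.gcd r k).totient : ℝ) := by
  have hr0 : r ≠ 0 := hr.ne_zero
  have hk0 : k ≠ 0 := by omega
  set g := Nat.gcd r k with hg
  set m := r / g with hm
  have hg_dvd : g ∣ r := Nat.gcd_dvd_left r k
  have hmg : m * g = r := Nat.div_mul_cancel hg_dvd
  have hcop_mk : Nat.Coprime m k := Nat.coprime_div_gcd_of_squarefree hr hk0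
  have hsm : Squarefree m := Squarefree.squarefree_of_dvd ⟨g, hmg.symm⟩ hr
  have hsg : Squarefree g := Squarefree.squarefree_of_dvd hg_dvd hr
  have hcop_mg : Nat.Coprime m g := Nat.coprime_of_squarefree_mul (hmg ▸ hr)
  have hset : r.divisors.filter (fun d => Nat.gcd d k = 1) = m.divisors := by
    ext d
    simp only [Finset.mem_filter, Nat.mem_divisors]
    constructor
    · rintro ⟨⟨hd, _⟩, hdk⟩
      have hcdg : Nat.Coprime d g := Nat.Coprime.coprime_dvd_right (Nat.gcd_dvd_right r k) hdk
      exact ⟨Nat.Coprime.dvd_of_dvd_mul_right hcdg (hmg ▸ hd), hsm.ne_zero⟩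
    · rintro ⟨hd, _⟩
      exact ⟨⟨hd.trans ⟨g, hmg.symm⟩, hr0⟩, Nat.Coprime.coprime_dvd_left hd hcop_mk⟩
  rw [hset, sum_div_eq m hsm]
  have h1 : (ArithmeticFunction.moebius r : ℝ)
      = (ArithmeticFunction.moebius m : ℝ) * (ArithmeticFunction.moebius g : ℝ) := by
    rw [← hmg]
    exact_mod_cast congrArg Int.cast (ArithmeticFunction.isMultiplicative_moebius.map_mul_of_coprime hcop_mg)
  have h2 : (r.totient : ℝ) = (m.totient : ℝ) * (g.totient : ℝ) := by
    rw [← hmg, Nat.totient_mul hcop_mg]; push_cast; ring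
  have h3 : (ArithmeticFunction.moebius g : ℝ) * (ArithmeticFunction.moebius g : ℝ) = 1 := by
    have h := ArithmeticFunction.moebius_sq_eq_one_of_squarefree hsg
    rw [← sq]
    exact_mod_cast congrArg (Int.cast : ℤ → ℝ) h
  have h4 : (g.totient : ℝ) ≠ 0 := by
    exact_mod_cast (Nat.totient_pos.mpr (Nat.pos_of_ne_zero hsg.ne_zero)).ne'
  have h5 : (m.totient : ℝ) ≠ 0 := by
    exact_mod_cast (Nat.totient_pos.mpr (Nat.pos_of_ne_zero hsm.ne_zero)).ne'
  rw [h1, h2]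
  have hkey : ((ArithmeticFunction.moebius m : ℝ) * (ArithmeticFunction.moebius g : ℝ))
        / ((m.totient : ℝ) * (g.totient : ℝ)) * (ArithmeticFunction.moebius g : ℝ) * (g.totient : ℝ)
      = (ArithmeticFunction.moebius m : ℝ) / (m.totient : ℝ)
        * (((ArithmeticFunction.moebius g : ℝ) * (ArithmeticFunction.moebius g : ℝ))
            * ((g.totient : ℝ) / (g.totient : ℝ))) := by
    rw [div_self h4]
    field_simp
  rw [hkey, h3, div_self h4, mul_one, mul_one]
end

section
/- There is a constant A > 0 such that for every real R ≥ 1, Σ_{r ≤ R} μ²(r)·σ(r)/φ(r) ≤ A·R, where σ(r) is the sum of the divisors of r. -/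
open Finset ArithmeticFunction

/-- Auxiliary: `g(d) = ∏_{p ∣ d} 2/(p−1)`. -/
noncomputable def gAux (d : ℕ) : ℝ := ∏ p ∈ d.primeFactors, (2 / ((p : ℝ) - 1))

lemma one_le_sub_one {p : ℕ} (hp : p.Prime) : (1 : ℝ) ≤ (p : ℝ) - 1 := by
  have : (2 : ℝ) ≤ (p : ℝ) := by exact_mod_cast hp.two_le
  linarith

lemma gAux_nonneg (d : ℕ) : 0 ≤ gAux d := by
  apply Finset.prod_nonneg
  intro p hp
  have := one_le_sub_one (Nat.prime_of_mem_primeFactors hp)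
  positivity

/-- For squarefree `r`, `σ(r)/φ(r) = ∑_{d ∣ r} g(d)`. -/
lemma sigma_div_totient_eq {r : ℕ} (hr : Squarefree r) :
    (∑ d ∈ r.divisors, (d : ℝ)) / (r.totient : ℝ) = ∑ d ∈ r.divisors, gAux d := by
  classical
  have hr0 : r ≠ 0 := hr.ne_zero
  -- numerator
  have hσ : (∑ d ∈ r.divisors, (d : ℝ)) = ∏ p ∈ r.primeFactors, ((p : ℝ) + 1) := by
    have h1 : (ArithmeticFunction.sigma 1) r =
        ∏ p ∈ r.primeFactors, (ArithmeticFunction.sigma 1) p := by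
      conv_lhs => rw [← Nat.prod_primeFactors_of_squarefree hr]
      exact ArithmeticFunction.isMultiplicative_sigma.map_prod_of_subset_primeFactors r _
        Finset.Subset.rfl
    have h2 : ∀ p ∈ r.primeFactors, (ArithmeticFunction.sigma 1) p = p + 1 := by
      intro p hp
      have hpp := Nat.prime_of_mem_primeFactors hp
      rw [ArithmeticFunction.sigma_one_apply, hpp.divisors, Finset.sum_pair hpp.one_lt.ne]
      omega
    have : (∑ d ∈ r.divisors, d : ℕ) = ∏ p ∈ r.primeFactors, (p + 1) := by
      rw [← ArithmeticFunction.sigma_one_apply, h1]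
      exact Finset.prod_congr rfl h2
    rw [← Nat.cast_sum, this, Nat.cast_prod]
    exact Finset.prod_congr rfl fun p _ => by push_cast; ring
  -- denominator
  have hφ : (r.totient : ℝ) = ∏ p ∈ r.primeFactors, ((p : ℝ) - 1) := by
    have h1 : r.totient = ∏ p ∈ r.primeFactors, (p - 1) := by
      rw [Nat.totient_eq_prod_factorization hr0]
      rw [Finsupp.prod]
      rw [Nat.support_factorization]
      refine Finset.prod_congr rfl fun p hp => ?_
      rw [Nat.factorization_eq_one_of_squarefree hr (Nat.prime_of_mem_primeFactors hp)
        (Nat.dvd_of_mem_primeFactors hp)]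
      simp
    rw [h1]
    push_cast [Nat.cast_prod]
    refine Finset.prod_congr rfl fun p hp => ?_
    have := (Nat.prime_of_mem_primeFactors hp).one_lt
    push_cast [Nat.cast_sub this.le]
    ring
  -- divisor-sum identity
  have hF := (ArithmeticFunction.IsMultiplicative.prodPrimeFactors
      (fun p => 2 / ((p : ℝ) - 1))).prodPrimeFactors_one_add_of_squarefree hr
  have hFg : ∀ d ∈ r.divisors, (ArithmeticFunction.prodPrimeFactors
      (fun p => 2 / ((p : ℝ) - 1))) d = gAux d := by
    intro d hd
    have hd0 : d ≠ 0 := (Nat.pos_of_mem_divisors hd).ne'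
    rw [ArithmeticFunction.prodPrimeFactors_apply hd0]
    rfl
  have hFp : ∀ p ∈ r.primeFactors,
      (1 : ℝ) + (ArithmeticFunction.prodPrimeFactors (fun p => 2 / ((p : ℝ) - 1))) p
        = ((p : ℝ) + 1) / ((p : ℝ) - 1) := by
    intro p hp
    have hpp := Nat.prime_of_mem_primeFactors hp
    rw [ArithmeticFunction.prodPrimeFactors_apply hpp.ne_zero, hpp.primeFactors,
      Finset.prod_singleton]
    have h1 := one_le_sub_one hpp
    field_simp
    ring
  rw [hσ, hφ, ← Finset.sum_congr rfl hFg, ← hF, Finset.prod_congr rfl hFp,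
    ← Finset.prod_div_distrib]

/-- For squarefree `d`, `g(d)·√d ≤ 6`. -/
lemma gAux_sqrt_le {d : ℕ} (hd : Squarefree d) : gAux d * Real.sqrt d ≤ 6 := by
  classical
  have hg := gAux_nonneg d
  have hsq : (gAux d * Real.sqrt d) ^ 2 = ∏ p ∈ d.primeFactors, (4 * p / ((p : ℝ) - 1) ^ 2) := by
    rw [mul_pow, Real.sq_sqrt (by positivity : (0:ℝ) ≤ (d:ℝ))]
    have hd' : ((d : ℕ) : ℝ) = ∏ p ∈ d.primeFactors, (p : ℝ) := by
      conv_lhs => rw [← Nat.prod_primeFactors_of_squarefree hd]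
      exact Nat.cast_prod _ _
    rw [hd', gAux, ← Finset.prod_pow, ← Finset.prod_mul_distrib]
    refine Finset.prod_congr rfl fun p hp => ?_
    have h1 := one_le_sub_one (Nat.prime_of_mem_primeFactors hp)
    rw [div_pow, div_mul_eq_mul_div]
    norm_num
  have hprod : ∏ p ∈ d.primeFactors, (4 * (p:ℝ) / ((p : ℝ) - 1) ^ 2) ≤ 36 := by
    set S := d.primeFactors with hS
    have hSp : ∀ p ∈ S, Nat.Prime p := fun p hp => Nat.prime_of_mem_primeFactors hp
    have hfac_nonneg : ∀ p ∈ S, (0:ℝ) ≤ 4 * (p:ℝ) / ((p:ℝ) - 1) ^ 2 := by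
      intro p hp
      have := one_le_sub_one (hSp p hp)
      positivity
    rw [← Finset.prod_filter_mul_prod_filter_not S (fun p => p < 7)]
    have h2 : ∏ p ∈ S.filter (fun p => ¬ p < 7), (4 * (p:ℝ) / ((p:ℝ) - 1) ^ 2) ≤ 1 := by
      apply Finset.prod_le_one
      · intro p hp
        exact hfac_nonneg p (Finset.mem_filter.mp hp).1
      · intro p hp
        obtain ⟨hpS, hp7⟩ := Finset.mem_filter.mp hp
        have hp7' : (7:ℝ) ≤ (p:ℝ) := by exact_mod_cast Nat.le_of_not_lt hp7
        have h1 := one_le_sub_one (hSp p hpS)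
        rw [div_le_one (by positivity)]
        nlinarith
    have h1 : ∏ p ∈ S.filter (fun p => p < 7), (4 * (p:ℝ) / ((p:ℝ) - 1) ^ 2) ≤ 36 := by
      have hsub : S.filter (fun p => p < 7) ⊆ ({2, 3, 5} : Finset ℕ) := by
        intro p hp
        obtain ⟨hpS, hp7⟩ := Finset.mem_filter.mp hp
        have hpp := hSp p hpS
        interval_cases p <;> revert hpp <;> decide
      have hone : ∀ p ∈ ({2, 3, 5} : Finset ℕ), p ∉ S.filter (fun p => p < 7) →
          (1:ℝ) ≤ 4 * (p:ℝ) / ((p:ℝ) - 1) ^ 2 := by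
        intro p hp _
        fin_cases hp <;> norm_num
      calc ∏ p ∈ S.filter (fun p => p < 7), (4 * (p:ℝ) / ((p:ℝ) - 1) ^ 2)
          ≤ ∏ p ∈ ({2, 3, 5} : Finset ℕ), (4 * (p:ℝ) / ((p:ℝ) - 1) ^ 2) := by
            rw [← Finset.prod_sdiff hsub]
            refine le_mul_of_one_le_left (Finset.prod_nonneg fun p hp =>
              hfac_nonneg p (Finset.mem_filter.mp hp).1) ?_
            calc (1:ℝ) = ∏ _p ∈ ({2,3,5} : Finset ℕ) \ S.filter (fun p => p < 7), (1:ℝ) := by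
                  simp
              _ ≤ _ := Finset.prod_le_prod (fun _ _ => by norm_num)
                  (fun p hp => hone p (Finset.mem_sdiff.mp hp).1 (Finset.mem_sdiff.mp hp).2)
        _ ≤ 36 := by norm_num
    have h3 : (0:ℝ) ≤ ∏ p ∈ S.filter (fun p => ¬ p < 7), (4 * (p:ℝ) / ((p:ℝ) - 1) ^ 2) :=
      Finset.prod_nonneg fun p hp => hfac_nonneg p (Finset.mem_filter.mp hp).1
    have h4 := mul_le_mul h1 h2 h3 (by norm_num : (0:ℝ) ≤ 36)
    linarith
  have hnn : 0 ≤ gAux d * Real.sqrt d := mul_nonneg hg (Real.sqrt_nonneg _)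
  nlinarith [hsq, hprod]

theorem lemma9_sigma_one :
    ∃ A : ℝ, 0 < A ∧ ∀ R : ℝ, 1 ≤ R →
      (∑ r ∈ Finset.Icc 1 ⌊R⌋₊,
          (ArithmeticFunction.moebius r : ℝ) ^ 2 * (∑ d ∈ r.divisors, (d : ℝ))
            / (r.totient : ℝ))
        ≤ A * R := by
  classical
  set T : ℝ := ∑' n : ℕ, 1 / (n : ℝ) ^ ((3:ℝ)/2) with hT
  have hTsummable : Summable (fun n : ℕ => 1 / (n : ℝ) ^ ((3:ℝ)/2)) :=
    Real.summable_one_div_nat_rpow.mpr (by norm_num)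
  have hTnonneg : 0 ≤ T := tsum_nonneg fun n => by positivity
  refine ⟨6 * T + 1, by positivity, fun R hR => ?_⟩
  set N := ⌊R⌋₊ with hN
  have hR0 : (0:ℝ) ≤ R := by linarith
  have hNR : (N : ℝ) ≤ R := Nat.floor_le hR0
  set G : ℕ → ℝ := fun d => if Squarefree d then gAux d else 0 with hG
  have hGnonneg : ∀ d, 0 ≤ G d := by
    intro d
    simp only [hG]
    split
    · exact gAux_nonneg d
    · exact le_rfl
  -- Step 1: termwise bound by divisor sums
  have step1 : (∑ r ∈ Finset.Icc 1 N,
      (ArithmeticFunction.moebius r : ℝ) ^ 2 * (∑ d ∈ r.divisors, (d : ℝ)) / (r.totient : ℝ))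
      ≤ ∑ r ∈ Finset.Icc 1 N, ∑ d ∈ r.divisors, G d := by
    apply Finset.sum_le_sum
    intro r hr
    by_cases hsf : Squarefree r
    · have hμ : ((ArithmeticFunction.moebius r : ℤ) : ℝ) ^ 2 = 1 := by
        have := ArithmeticFunction.moebius_sq_eq_one_of_squarefree hsf
        exact_mod_cast congrArg (fun z : ℤ => (z : ℝ)) this
      rw [hμ, one_mul, sigma_div_totient_eq hsf]
      apply Finset.sum_le_sum
      intro d hd
      have hdsf : Squarefree d := hsf.squarefree_of_dvd (Nat.dvd_of_mem_divisors hd)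
      rw [hG]
      simp [hdsf]
    · rw [ArithmeticFunction.moebius_eq_zero_of_not_squarefree hsf]
      simp only [Int.cast_zero, ne_eq, OfNat.ofNat_ne_zero, not_false_eq_true, zero_pow,
        zero_mul, zero_div]
      exact Finset.sum_nonneg fun d _ => hGnonneg d
  -- Step 2: swap order of summation
  have step2 : (∑ r ∈ Finset.Icc 1 N, ∑ d ∈ r.divisors, G d)
      = ∑ d ∈ Finset.Icc 1 N, G d * ((N / d : ℕ) : ℝ) := by
    have hdiv : ∀ r ∈ Finset.Icc 1 N, r.divisors = (Finset.Icc 1 N).filter (· ∣ r) := by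
      intro r hr
      obtain ⟨hr1, hrN⟩ := Finset.mem_Icc.mp hr
      ext d
      simp only [Nat.mem_divisors, Finset.mem_filter, Finset.mem_Icc]
      constructor
      · rintro ⟨hd, hr0⟩
        exact ⟨⟨Nat.one_le_iff_ne_zero.mpr (fun h => by simp [h] at hd; omega),
          le_trans (Nat.le_of_dvd (by omega) hd) hrN⟩, hd⟩
      · rintro ⟨_, hd⟩
        exact ⟨hd, by omega⟩
    rw [Finset.sum_congr rfl fun r hr => by rw [hdiv r hr, Finset.sum_filter]]
    rw [Finset.sum_comm]
    refine Finset.sum_congr rfl fun d hd => ?_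
    rw [← Finset.sum_filter, Finset.sum_const, nsmul_eq_mul, mul_comm]
    congr 1
    rw [show Finset.Icc 1 N = Finset.Ioc 0 N from Finset.Icc_add_one_left_eq_Ioc 0 N]
    exact_mod_cast congrArg (fun n : ℕ => (n : ℝ)) (Nat.Ioc_filter_dvd_card_eq_div N d)
  -- Step 3: bound each term
  have step3 : (∑ d ∈ Finset.Icc 1 N, G d * ((N / d : ℕ) : ℝ))
      ≤ ∑ d ∈ Finset.Icc 1 N, R * (6 * (1 / (d : ℝ) ^ ((3:ℝ)/2))) := by
    apply Finset.sum_le_sum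
    intro d hd
    obtain ⟨hd1, hdN⟩ := Finset.mem_Icc.mp hd
    have hd0 : (0:ℝ) < (d:ℝ) := by exact_mod_cast hd1
    have hsd : (0:ℝ) < Real.sqrt d := Real.sqrt_pos.mpr hd0
    have hcount : ((N / d : ℕ) : ℝ) ≤ R / (d : ℝ) :=
      le_trans Nat.cast_div_le (by gcongr)
    have hGd : G d ≤ 6 / Real.sqrt d := by
      simp only [hG]
      split
      · rw [le_div_iff₀ hsd]
        exact gAux_sqrt_le (by assumption)
      · positivity
    have hrpow : (d : ℝ) ^ ((3:ℝ)/2) = (d : ℝ) * Real.sqrt d := by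
      rw [show (3:ℝ)/2 = 1 + 1/2 by norm_num, Real.rpow_add hd0, Real.rpow_one,
        Real.sqrt_eq_rpow]
    calc G d * ((N / d : ℕ) : ℝ) ≤ (6 / Real.sqrt d) * (R / (d : ℝ)) :=
          mul_le_mul hGd hcount (by positivity) (by positivity)
      _ = R * (6 * (1 / (d : ℝ) ^ ((3:ℝ)/2))) := by
          rw [hrpow]; field_simp
  -- Step 4: conclude
  have step4 : (∑ d ∈ Finset.Icc 1 N, R * (6 * (1 / (d : ℝ) ^ ((3:ℝ)/2))))
      ≤ (6 * T + 1) * R := by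
    rw [← Finset.mul_sum, ← Finset.mul_sum]
    have hsum : (∑ d ∈ Finset.Icc 1 N, 1 / (d : ℝ) ^ ((3:ℝ)/2)) ≤ T :=
      Summable.sum_le_tsum (Finset.Icc 1 N) (fun i _ => by positivity) hTsummable
    have : R * (6 * (∑ d ∈ Finset.Icc 1 N, 1 / (d : ℝ) ^ ((3:ℝ)/2))) ≤ R * (6 * T) := by
      apply mul_le_mul_of_nonneg_left _ hR0
      linarith
    nlinarith
  exact le_trans step1 (le_trans (le_of_eq step2) (le_trans step3 step4))
end

section
/- There is a constant A > 0 such that for every real R ≥ 1, Σ_{r ≤ R} μ²(r)·σ_{1/2}(r)/φ(r) ≤ A·√R, where σ_{1/2}(r) = Σ_{d | r} d^{1/2}. -/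
open Finset ArithmeticFunction

noncomputable def Hf (d : ℕ) : ℝ :=
  ∏ p ∈ d.primeFactors, (1 + Real.sqrt p) / ((p : ℝ) - 1)

lemma Hf_nonneg (d : ℕ) : 0 ≤ Hf d := by
  apply Finset.prod_nonneg
  intro p hp
  have hp2 : 2 ≤ p := (Nat.prime_of_mem_primeFactors hp).two_le
  have : (1:ℝ) ≤ (p:ℝ) := by exact_mod_cast Nat.one_le_iff_ne_zero.mpr (by omega)
  have : (0:ℝ) ≤ (p:ℝ) - 1 := by linarith
  positivity

-- sum over divisors of a squarefree number of a "primeFactors-product" function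
lemma sum_div_sf {n : ℕ} (hn : Squarefree n) (g : ℕ → ℝ) :
    ∑ d ∈ n.divisors, ∏ p ∈ d.primeFactors, g p = ∏ p ∈ n.primeFactors, (1 + g p) := by
  rw [← Nat.divisors_filter_squarefree_of_squarefree hn,
    Nat.sum_divisors_filter_squarefree hn.ne_zero]
  rw [show ∀ f : ℕ → ℝ, ∏ p ∈ n.primeFactors, (1 + f p) = ∏ p ∈ n.primeFactors, (f p + 1)
    from fun f => by simp [add_comm]]
  rw [Finset.prod_add]
  rw [Nat.factors_eq]
  simp only [Finset.prod_const_one, mul_one]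
  rw [show (n.primeFactorsList : Multiset ℕ).toFinset = n.primeFactors from rfl]
  apply Finset.sum_congr rfl
  intro t ht
  rw [Finset.mem_powerset] at ht
  have hprime : ∀ p ∈ t, p.Prime := fun p hp => Nat.prime_of_mem_primeFactors (ht hp)
  rw [t.prod_val, show (Finset.prod t _root_.id).primeFactors = t from by
    simpa using Nat.primeFactors_prod hprime]

lemma sqrt_finset_prod (s : Finset ℕ) (f : ℕ → ℝ) (hf : ∀ i ∈ s, 0 ≤ f i) :
    Real.sqrt (∏ i ∈ s, f i) = ∏ i ∈ s, Real.sqrt (f i) := by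
  induction s using Finset.cons_induction with
  | empty => simp
  | cons a s ha ih =>
    rw [Finset.prod_cons, Finset.prod_cons, Real.sqrt_mul (hf a (Finset.mem_cons_self a s)),
      ih (fun i hi => hf i (Finset.mem_cons_of_mem hi))]

lemma sqrt_sf {n : ℕ} (hn : Squarefree n) :
    Real.sqrt (n : ℝ) = ∏ p ∈ n.primeFactors, Real.sqrt p := by
  conv_lhs => rw [← Nat.prod_primeFactors_of_squarefree hn]
  push_cast
  exact sqrt_finset_prod _ _ (fun i _ => by positivity)

lemma totient_sf {n : ℕ} (hn : Squarefree n) :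
    (n.totient : ℝ) = ∏ p ∈ n.primeFactors, ((p : ℝ) - 1) := by
  conv_lhs => rw [← Nat.prod_primeFactors_of_squarefree hn]
  have key : ∀ t : Finset ℕ, (∀ p ∈ t, p.Prime) →
      ((∏ p ∈ t, p).totient : ℝ) = ∏ p ∈ t, ((p : ℝ) - 1) := by
    intro t
    induction t using Finset.cons_induction with
    | empty => simp
    | cons a s ha ih =>
      intro hp
      have hap : a.Prime := hp a (Finset.mem_cons_self a s)
      have hsp : ∀ p ∈ s, p.Prime := fun p hps => hp p (Finset.mem_cons_of_mem hps)
      have hcop : a.Coprime (∏ p ∈ s, p) := by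
        apply Nat.Coprime.prod_right
        intro p hps
        exact (Nat.coprime_primes hap (hsp p hps)).mpr (by rintro rfl; exact ha hps)
      rw [Finset.prod_cons, Nat.totient_mul hcop, Finset.prod_cons, Nat.cast_mul, ih hsp,
        Nat.totient_prime hap, Nat.cast_sub hap.one_le, Nat.cast_one]
  exact key _ (fun p hp => Nat.prime_of_mem_primeFactors hp)

lemma key_identity {r : ℕ} (hr : Squarefree r) :
    (∑ d ∈ r.divisors, Real.sqrt d) / (r.totient : ℝ)
      = (Real.sqrt r)⁻¹ * ∑ d ∈ r.divisors, Hf d := by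
  have hA : ∑ d ∈ r.divisors, Real.sqrt d
      = ∏ p ∈ r.primeFactors, (1 + Real.sqrt p) := by
    rw [← sum_div_sf hr (fun p => Real.sqrt p)]
    apply Finset.sum_congr rfl
    intro d hd
    exact sqrt_sf (hr.squarefree_of_dvd (Nat.dvd_of_mem_divisors hd))
  have hB : ∑ d ∈ r.divisors, Hf d
      = ∏ p ∈ r.primeFactors, (1 + (1 + Real.sqrt p) / ((p : ℝ) - 1)) :=
    sum_div_sf hr _
  rw [hA, hB, totient_sf hr, sqrt_sf hr, ← Finset.prod_inv_distrib, ← Finset.prod_mul_distrib,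
    ← Finset.prod_div_distrib]
  apply Finset.prod_congr rfl
  intro p hp
  have hp' : p.Prime := Nat.prime_of_mem_primeFactors hp
  have hp2 : (2:ℝ) ≤ (p:ℝ) := by exact_mod_cast hp'.two_le
  have hs : Real.sqrt p * Real.sqrt p = (p:ℝ) := Real.mul_self_sqrt (by positivity)
  have hs0 : (0:ℝ) < Real.sqrt p := Real.sqrt_pos.mpr (by linarith)
  have hp1 : (0:ℝ) < (p:ℝ) - 1 := by linarith
  field_simp
  nlinarith [hs]

lemma big_prime_factor {p : ℕ} (hp : p.Prime) (h7 : 7 ≤ p) :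
    (1 + Real.sqrt p) / ((p : ℝ) - 1) * Real.sqrt (Real.sqrt p) ≤ 1 := by
  set s := Real.sqrt p with hs_def
  set q := Real.sqrt s with hq_def
  have hp7 : (7:ℝ) ≤ (p:ℝ) := by exact_mod_cast h7
  have hs2 : s * s = (p:ℝ) := Real.mul_self_sqrt (by positivity)
  have hs0 : (0:ℝ) < s := Real.sqrt_pos.mpr (by linarith)
  have hq2 : q * q = s := Real.mul_self_sqrt hs0.le
  have hq0 : (0:ℝ) ≤ q := Real.sqrt_nonneg _
  have hq4 : q * q * (q * q) = (p:ℝ) := by rw [hq2, hs2]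
  -- q^4 ≥ 7 implies q^2 - q - 1 ≥ 0
  have hqgolden : q * q - q - 1 ≥ 0 := by
    rcases le_or_gt (q + 1) (q * q) with h | h
    · linarith
    · exfalso
      have h2 : q * q * (q * q) < (q + 1) * (q + 1) := by nlinarith
      have h3 : (7:ℝ) ≤ (q + 1) * (q + 1) := by nlinarith
      have h4 : (1.64:ℝ) < q := by nlinarith
      nlinarith
  have hqs : q ≤ s - 1 := by nlinarith [hq2]
  have hp1 : (0:ℝ) < (p:ℝ) - 1 := by linarith
  rw [div_mul_eq_mul_div, div_le_one hp1]
  have : (p:ℝ) - 1 = (s - 1) * (s + 1) := by nlinarith [hs2]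
  rw [this]
  calc (1 + s) * q ≤ (1 + s) * (s - 1) := by nlinarith [hqs, hs0]
    _ = (s - 1) * (s + 1) := by ring

lemma small_prime_factor {p : ℕ} (hp : p.Prime) (h7 : p < 7) :
    (1 + Real.sqrt p) / ((p : ℝ) - 1) * Real.sqrt (Real.sqrt p) ≤ 3 := by
  have sqrt_le : ∀ x y : ℝ, 0 ≤ y → x ≤ y ^ 2 → Real.sqrt x ≤ y := by
    intro x y hy hxy
    exact Real.sqrt_le_iff.mpr ⟨hy, hxy⟩
  interval_cases p
  · exact absurd hp (by norm_num)
  · exact absurd hp (by norm_num)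
  · -- p = 2
    have h1 : Real.sqrt 2 ≤ 1.42 := sqrt_le _ _ (by norm_num) (by norm_num)
    have h2 : Real.sqrt (Real.sqrt 2) ≤ 1.2 := sqrt_le _ _ (by norm_num) (by nlinarith)
    have h0 : (0:ℝ) ≤ Real.sqrt (Real.sqrt 2) := Real.sqrt_nonneg _
    push_cast
    norm_num
    nlinarith [h1, h2, h0]
  · -- p = 3
    have h1 : Real.sqrt 3 ≤ 1.8 := sqrt_le _ _ (by norm_num) (by norm_num)
    have h2 : Real.sqrt (Real.sqrt 3) ≤ 1.4 := sqrt_le _ _ (by norm_num) (by nlinarith)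
    have h0 : (0:ℝ) ≤ Real.sqrt (Real.sqrt 3) := Real.sqrt_nonneg _
    push_cast
    norm_num
    nlinarith [h1, h2, h0]
  · exact absurd hp (by norm_num)
  · -- p = 5
    have h1 : Real.sqrt 5 ≤ 2.3 := sqrt_le _ _ (by norm_num) (by norm_num)
    have h2 : Real.sqrt (Real.sqrt 5) ≤ 1.6 := sqrt_le _ _ (by norm_num) (by nlinarith)
    have h0 : (0:ℝ) ≤ Real.sqrt (Real.sqrt 5) := Real.sqrt_nonneg _
    push_cast
    norm_num
    nlinarith [h1, h2, h0]
  · exact absurd hp (by norm_num)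

lemma Hf_mul_le {d : ℕ} (hd : Squarefree d) :
    Hf d * Real.sqrt (Real.sqrt d) ≤ 27 := by
  have hsq : Real.sqrt (Real.sqrt d)
      = ∏ p ∈ d.primeFactors, Real.sqrt (Real.sqrt p) := by
    rw [sqrt_sf hd, sqrt_finset_prod _ _ (fun i _ => Real.sqrt_nonneg _)]
  rw [Hf, hsq, ← Finset.prod_mul_distrib]
  set g : ℕ → ℝ := fun p => (1 + Real.sqrt p) / ((p : ℝ) - 1) * Real.sqrt (Real.sqrt p)
    with hg_def
  have hg_nonneg : ∀ p ∈ d.primeFactors, 0 ≤ g p := by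
    intro p hp
    have hp2 : 2 ≤ p := (Nat.prime_of_mem_primeFactors hp).two_le
    have : (2:ℝ) ≤ (p:ℝ) := by exact_mod_cast hp2
    have h1 : (0:ℝ) ≤ (p:ℝ) - 1 := by linarith
    have := Real.sqrt_nonneg (p:ℝ)
    have := Real.sqrt_nonneg (Real.sqrt (p:ℝ))
    positivity
  rw [← Finset.prod_filter_mul_prod_filter_not d.primeFactors (fun p => p < 7)]
  have hbig : ∏ p ∈ d.primeFactors.filter (fun p => ¬ p < 7), g p ≤ 1 := by
    apply Finset.prod_le_one
    · intro p hp
      exact hg_nonneg p (Finset.mem_filter.mp hp).1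
    · intro p hp
      obtain ⟨hp1, hp2⟩ := Finset.mem_filter.mp hp
      exact big_prime_factor (Nat.prime_of_mem_primeFactors hp1) (by omega)
  have hsmall : ∏ p ∈ d.primeFactors.filter (fun p => p < 7), g p ≤ 27 := by
    have hsub : d.primeFactors.filter (fun p => p < 7) ⊆ ({2, 3, 5} : Finset ℕ) := by
      intro p hp
      obtain ⟨hp1, hp2⟩ := Finset.mem_filter.mp hp
      have hpp := Nat.prime_of_mem_primeFactors hp1
      interval_cases p <;> first
        | decide
        | (exact absurd hpp (by decide))
    calc ∏ p ∈ d.primeFactors.filter (fun p => p < 7), g p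
        ≤ ∏ p ∈ d.primeFactors.filter (fun p => p < 7), 3 := by
          apply Finset.prod_le_prod
          · intro p hp; exact hg_nonneg p (Finset.mem_filter.mp hp).1
          · intro p hp
            obtain ⟨hp1, hp2⟩ := Finset.mem_filter.mp hp
            exact small_prime_factor (Nat.prime_of_mem_primeFactors hp1) hp2
      _ = 3 ^ (d.primeFactors.filter (fun p => p < 7)).card := Finset.prod_const 3
      _ ≤ 3 ^ 3 := by
          apply pow_le_pow_right₀ (by norm_num)
          calc (d.primeFactors.filter (fun p => p < 7)).card
              ≤ ({2,3,5} : Finset ℕ).card := Finset.card_le_card hsub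
            _ = 3 := by decide
      _ = 27 := by norm_num
  have hsmall_nonneg : (0:ℝ) ≤ ∏ p ∈ d.primeFactors.filter (fun p => p < 7), g p :=
    Finset.prod_nonneg (fun p hp => hg_nonneg p (Finset.mem_filter.mp hp).1)
  have hbig_nonneg : (0:ℝ) ≤ ∏ p ∈ d.primeFactors.filter (fun p => ¬ p < 7), g p :=
    Finset.prod_nonneg (fun p hp => hg_nonneg p (Finset.mem_filter.mp hp).1)
  calc (∏ p ∈ d.primeFactors.filter (fun p => p < 7), g p) *
        ∏ p ∈ d.primeFactors.filter (fun p => ¬ p < 7), g p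
      ≤ 27 * 1 := mul_le_mul hsmall hbig hbig_nonneg (by norm_num)
    _ = 27 := by norm_num

lemma sum_inv_sqrt_le (M : ℕ) :
    ∑ m ∈ Finset.Icc 1 M, (Real.sqrt m)⁻¹ ≤ 2 * Real.sqrt M := by
  induction M with
  | zero => simp
  | succ M ih =>
    rw [Finset.sum_Icc_succ_top (by omega)]
    have ha0 : (0:ℝ) ≤ Real.sqrt M := Real.sqrt_nonneg _
    have hb0 : (0:ℝ) < Real.sqrt ((M:ℝ) + 1) := Real.sqrt_pos.mpr (by positivity)
    have ha2 : Real.sqrt M * Real.sqrt M = (M:ℝ) := Real.mul_self_sqrt (by positivity)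
    have hb2 : Real.sqrt ((M:ℝ)+1) * Real.sqrt ((M:ℝ)+1) = (M:ℝ) + 1 :=
      Real.mul_self_sqrt (by positivity)
    have hcast : ((M + 1 : ℕ) : ℝ) = (M:ℝ) + 1 := by push_cast; ring
    rw [hcast]
    have h1 : (1:ℝ)/(Real.sqrt ((M:ℝ)+1)) ≤ 2 * Real.sqrt ((M:ℝ)+1) - 2 * Real.sqrt M :=
      (div_le_iff₀ hb0).mpr (by nlinarith [sq_nonneg (Real.sqrt ((M:ℝ)+1) - Real.sqrt M)])
    rw [one_div] at h1
    linarith [ih]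

lemma sum_d54_le (N : ℕ) :
    ∑ d ∈ Finset.Icc 1 N, ((d : ℝ) * Real.sqrt (Real.sqrt d))⁻¹ ≤ 5 := by
  have main : ∀ N : ℕ, 1 ≤ N →
      ∑ d ∈ Finset.Icc 1 N, ((d : ℝ) * Real.sqrt (Real.sqrt d))⁻¹
        ≤ 5 - 4 * (Real.sqrt (Real.sqrt N))⁻¹ := by
    intro N hN
    induction N, hN using Nat.le_induction with
    | base => norm_num
    | succ N hN ih =>
      rw [Finset.sum_Icc_succ_top (by omega)]
      set a := Real.sqrt (Real.sqrt N) with ha_def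
      set b := Real.sqrt (Real.sqrt ((N:ℝ) + 1)) with hb_def
      have hcast : ((N + 1 : ℕ) : ℝ) = (N:ℝ) + 1 := by push_cast; ring
      have hN1 : (1:ℝ) ≤ (N:ℝ) := by exact_mod_cast hN
      have ha0 : (0:ℝ) < a := Real.sqrt_pos.mpr (Real.sqrt_pos.mpr (by linarith))
      have hb0 : (0:ℝ) < b := Real.sqrt_pos.mpr (Real.sqrt_pos.mpr (by linarith))
      have ha4 : a * a * (a * a) = (N:ℝ) := by
        rw [Real.mul_self_sqrt (Real.sqrt_nonneg _), Real.mul_self_sqrt (by positivity)]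
      have hb4 : b * b * (b * b) = (N:ℝ) + 1 := by
        rw [Real.mul_self_sqrt (Real.sqrt_nonneg _), Real.mul_self_sqrt (by positivity)]
      have hab : a ≤ b := by
        apply Real.sqrt_le_sqrt; apply Real.sqrt_le_sqrt; linarith
      have hident : (b - a) * ((a + b) * (a*a + b*b)) = 1 := by
        have h : (b - a) * ((a + b) * (a*a + b*b)) = b*b*(b*b) - a*a*(a*a) := by ring
        rw [h, ha4, hb4]; ring
      have e2 : a*a ≤ b*b := mul_le_mul hab hab ha0.le hb0.le
      have e3 : a*(a*a) ≤ b*(b*b) := mul_le_mul hab e2 (by positivity) hb0.le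
      have e4 : a*a*(a*a) ≤ b*b*(b*b) := mul_le_mul e2 e2 (by positivity) (by positivity)
      have m1 := mul_le_mul_of_nonneg_right e4 hb0.le
      have m2 := mul_le_mul_of_nonneg_right e3 (mul_nonneg hb0.le hb0.le)
      have m3 := mul_le_mul_of_nonneg_right e2 (by positivity : (0:ℝ) ≤ b*(b*b))
      have m4 := mul_le_mul_of_nonneg_right hab (by positivity : (0:ℝ) ≤ b*b*(b*b))
      have h4 : a * b * ((a + b) * (a*a + b*b)) ≤ 4 * (b*b*(b*b)*b) := by
        nlinarith [m1, m2, m3, m4]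
      have hstep : (((N:ℝ) + 1) * b)⁻¹ ≤ 4 * a⁻¹ - 4 * b⁻¹ := by
        have hd : 4 * a⁻¹ - 4 * b⁻¹ = 4*(b-a)/(a*b) := by
          field_simp
        rw [hd, inv_eq_one_div, div_le_div_iff₀ (by positivity) (by positivity), ← hb4]
        have hab2 : (b - a) * (a*b*((a+b)*(a*a+b*b))) = a*b := by
          rw [show (b-a) * (a*b*((a+b)*(a*a+b*b)))
              = (a*b) * ((b-a)*((a+b)*(a*a+b*b))) from by ring, hident, mul_one]
        nlinarith [mul_le_mul_of_nonneg_left h4 (sub_nonneg.mpr hab), hab2]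
      rw [hcast]
      calc ∑ d ∈ Finset.Icc 1 N, ((d : ℝ) * Real.sqrt (Real.sqrt d))⁻¹
            + (((N:ℝ) + 1) * Real.sqrt (Real.sqrt ((N:ℝ)+1)))⁻¹
          ≤ (5 - 4 * a⁻¹) + (4 * a⁻¹ - 4 * b⁻¹) := add_le_add ih hstep
        _ = 5 - 4 * b⁻¹ := by ring
  rcases Nat.eq_zero_or_pos N with h | h
  · subst h; simp
  · have h2 : (0:ℝ) ≤ 4 * (Real.sqrt (Real.sqrt N))⁻¹ := by positivity
    linarith [main N h]

lemma moebius_sq_le_one (n : ℕ) : ((moebius n : ℤ) : ℝ)^2 ≤ 1 := by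
  by_cases h : Squarefree n
  · have h1 : (moebius n : ℤ)^2 = 1 := ArithmeticFunction.moebius_sq_eq_one_of_squarefree h
    have : (((moebius n : ℤ) : ℝ))^2 = 1 := by exact_mod_cast congrArg (fun z : ℤ => (z : ℝ)) h1
    rw [this]
  · rw [ArithmeticFunction.moebius_eq_zero_of_not_squarefree h]
    norm_num

theorem lemma9_sigma_half :
    ∃ A : ℝ, 0 < A ∧ ∀ R : ℝ, 1 ≤ R →
      (∑ r ∈ Finset.Icc 1 ⌊R⌋₊,
          (ArithmeticFunction.moebius r : ℝ) ^ 2 * (∑ d ∈ r.divisors, Real.sqrt d)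
            / (r.totient : ℝ))
        ≤ A * Real.sqrt R := by
  refine ⟨270, by norm_num, ?_⟩
  intro R hR
  set N := ⌊R⌋₊ with hNdef
  set F : ℕ → ℕ → ℝ := fun r d =>
    (ArithmeticFunction.moebius r : ℝ)^2 *
      ((Real.sqrt r)⁻¹ * ((ArithmeticFunction.moebius d : ℝ)^2 * Hf d)) with hF
  -- Step 1: rewrite each term using the key identity
  have hstep1 : ∑ r ∈ Finset.Icc 1 N,
      (ArithmeticFunction.moebius r : ℝ)^2 * (∑ d ∈ r.divisors, Real.sqrt d) / (r.totient : ℝ)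
      = ∑ r ∈ Finset.Icc 1 N, ∑ d ∈ r.divisors, F r d := by
    apply Finset.sum_congr rfl
    intro r hr
    obtain ⟨hr1, hr2⟩ := Finset.mem_Icc.mp hr
    by_cases hsq : Squarefree r
    · have hmu : (ArithmeticFunction.moebius r : ℝ)^2 = 1 := by
        have h1 : (ArithmeticFunction.moebius r : ℤ)^2 = 1 :=
          ArithmeticFunction.moebius_sq_eq_one_of_squarefree hsq
        exact_mod_cast congrArg (fun z : ℤ => (z : ℝ)) h1
      have hmud : ∀ d ∈ r.divisors, (ArithmeticFunction.moebius d : ℝ)^2 * Hf d = Hf d := by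
        intro d hd
        have hdsq : Squarefree d := hsq.squarefree_of_dvd (Nat.dvd_of_mem_divisors hd)
        have h1 : (ArithmeticFunction.moebius d : ℤ)^2 = 1 :=
          ArithmeticFunction.moebius_sq_eq_one_of_squarefree hdsq
        have h2 : (ArithmeticFunction.moebius d : ℝ)^2 = 1 := by
          exact_mod_cast congrArg (fun z : ℤ => (z : ℝ)) h1
        rw [h2, one_mul]
      calc (ArithmeticFunction.moebius r : ℝ)^2 * (∑ d ∈ r.divisors, Real.sqrt d)
            / (r.totient : ℝ)
          = (∑ d ∈ r.divisors, Real.sqrt d) / (r.totient : ℝ) := by rw [hmu, one_mul]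
        _ = (Real.sqrt r)⁻¹ * ∑ d ∈ r.divisors, Hf d := key_identity hsq
        _ = ∑ d ∈ r.divisors, F r d := by
            rw [Finset.mul_sum]
            apply Finset.sum_congr rfl
            intro d hd
            rw [hF]
            simp only []
            rw [hmud d hd, hmu, one_mul]
    · have hmu : (ArithmeticFunction.moebius r : ℝ) = 0 := by
        rw [ArithmeticFunction.moebius_eq_zero_of_not_squarefree hsq]; norm_num
      rw [hF]
      simp [hmu]
  rw [hstep1]
  -- Step 2: swap the sums
  have hstep2 : ∑ r ∈ Finset.Icc 1 N, ∑ d ∈ r.divisors, F r d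
      = ∑ d ∈ Finset.Icc 1 N, ∑ r ∈ (Finset.Icc 1 N).filter (fun r => d ∣ r), F r d := by
    have hdiv : ∀ r ∈ Finset.Icc 1 N, r.divisors = (Finset.Icc 1 N).filter (fun d => d ∣ r) := by
      intro r hr
      obtain ⟨hr1, hr2⟩ := Finset.mem_Icc.mp hr
      ext d
      simp only [Nat.mem_divisors, Finset.mem_filter, Finset.mem_Icc]
      constructor
      · rintro ⟨hd, -⟩
        exact ⟨⟨Nat.pos_of_dvd_of_pos hd (by omega),
          le_trans (Nat.le_of_dvd (by omega) hd) hr2⟩, hd⟩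
      · rintro ⟨-, hd⟩
        exact ⟨hd, by omega⟩
    calc ∑ r ∈ Finset.Icc 1 N, ∑ d ∈ r.divisors, F r d
        = ∑ r ∈ Finset.Icc 1 N, ∑ d ∈ Finset.Icc 1 N, if d ∣ r then F r d else 0 := by
          apply Finset.sum_congr rfl
          intro r hr
          rw [hdiv r hr, Finset.sum_filter]
      _ = ∑ d ∈ Finset.Icc 1 N, ∑ r ∈ Finset.Icc 1 N, if d ∣ r then F r d else 0 :=
          Finset.sum_comm
      _ = ∑ d ∈ Finset.Icc 1 N, ∑ r ∈ (Finset.Icc 1 N).filter (fun r => d ∣ r), F r d := by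
          apply Finset.sum_congr rfl
          intro d _
          rw [Finset.sum_filter]
  rw [hstep2]
  -- Step 3: reindex the inner sum and bound
  have hNR : Real.sqrt N ≤ Real.sqrt R := Real.sqrt_le_sqrt (Nat.floor_le (by linarith))
  have hbound : ∀ d ∈ Finset.Icc 1 N,
      ∑ r ∈ (Finset.Icc 1 N).filter (fun r => d ∣ r), F r d
        ≤ 2 * Real.sqrt N * (27 * (((d:ℝ) * Real.sqrt (Real.sqrt d))⁻¹)) := by
    intro d hd
    obtain ⟨hd1, hd2⟩ := Finset.mem_Icc.mp hd
    have hd0 : (0:ℝ) < (d:ℝ) := by exact_mod_cast hd1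
    have hsd0 : (0:ℝ) < Real.sqrt d := Real.sqrt_pos.mpr hd0
    have hssd0 : (0:ℝ) < Real.sqrt (Real.sqrt d) := Real.sqrt_pos.mpr hsd0
    -- reindex
    have hre : ∑ r ∈ (Finset.Icc 1 N).filter (fun r => d ∣ r), F r d
        = ∑ m ∈ Finset.Icc 1 (N / d), F (d * m) d := by
      apply Finset.sum_bij' (fun r _ => r / d) (fun m _ => d * m)
      · intro r hr
        obtain ⟨hrI, hrd⟩ := Finset.mem_filter.mp hr
        obtain ⟨hr1, hr2⟩ := Finset.mem_Icc.mp hrI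
        rw [Finset.mem_Icc]
        constructor
        · exact Nat.one_le_div_iff (by omega) |>.mpr (Nat.le_of_dvd (by omega) hrd)
        · exact Nat.div_le_div_right hr2
      · intro m hm
        obtain ⟨hm1, hm2⟩ := Finset.mem_Icc.mp hm
        rw [Finset.mem_filter, Finset.mem_Icc]
        refine ⟨⟨Nat.one_le_iff_ne_zero.mpr (Nat.mul_ne_zero (by omega) (by omega)), ?_⟩,
          Dvd.intro m rfl⟩
        calc d * m ≤ d * (N / d) := Nat.mul_le_mul_left d hm2
          _ ≤ N := Nat.mul_div_le N d
      · intro r hr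
        obtain ⟨hrI, hrd⟩ := Finset.mem_filter.mp hr
        exact Nat.mul_div_cancel' hrd
      · intro m hm
        exact Nat.mul_div_cancel_left m (by omega)
      · intro r hr
        obtain ⟨hrI, hrd⟩ := Finset.mem_filter.mp hr
        rw [Nat.mul_div_cancel' hrd]
    rw [hre]
    -- bound each term
    have hterm : ∀ m ∈ Finset.Icc 1 (N / d), F (d * m) d
        ≤ (ArithmeticFunction.moebius d : ℝ)^2 * Hf d *
            ((Real.sqrt d)⁻¹ * (Real.sqrt m)⁻¹) := by
      intro m hm
      obtain ⟨hm1, hm2⟩ := Finset.mem_Icc.mp hm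
      have hm0 : (0:ℝ) < (m:ℝ) := by exact_mod_cast hm1
      have hsm0 : (0:ℝ) < Real.sqrt m := Real.sqrt_pos.mpr hm0
      have hsplit : (Real.sqrt ((d * m : ℕ) : ℝ))⁻¹ = (Real.sqrt d)⁻¹ * (Real.sqrt m)⁻¹ := by
        rw [show ((d * m : ℕ) : ℝ) = (d:ℝ) * (m:ℝ) from by push_cast; ring,
          Real.sqrt_mul hd0.le, mul_inv]
      rw [hF]
      simp only []
      rw [hsplit]
      have h1 : (ArithmeticFunction.moebius (d * m) : ℝ)^2 ≤ 1 := moebius_sq_le_one (d * m)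
      have h2 : (0:ℝ) ≤ (ArithmeticFunction.moebius d : ℝ)^2 * Hf d :=
        mul_nonneg (sq_nonneg _) (Hf_nonneg d)
      have h3 : (0:ℝ) ≤ (Real.sqrt d)⁻¹ * (Real.sqrt m)⁻¹ := by positivity
      calc (ArithmeticFunction.moebius (d * m) : ℝ)^2 *
            ((Real.sqrt d)⁻¹ * (Real.sqrt m)⁻¹ * ((ArithmeticFunction.moebius d : ℝ)^2 * Hf d))
          ≤ 1 * ((Real.sqrt d)⁻¹ * (Real.sqrt m)⁻¹ * ((ArithmeticFunction.moebius d : ℝ)^2 * Hf d)) := by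
            apply mul_le_mul_of_nonneg_right h1
            exact mul_nonneg h3 h2
        _ = (ArithmeticFunction.moebius d : ℝ)^2 * Hf d *
            ((Real.sqrt d)⁻¹ * (Real.sqrt m)⁻¹) := by ring
    have hmuHf : (ArithmeticFunction.moebius d : ℝ)^2 * Hf d
        ≤ 27 * (Real.sqrt (Real.sqrt d))⁻¹ := by
      by_cases hsq : Squarefree d
      · have h1 : (ArithmeticFunction.moebius d : ℤ)^2 = 1 :=
          ArithmeticFunction.moebius_sq_eq_one_of_squarefree hsq
        have h2 : (ArithmeticFunction.moebius d : ℝ)^2 = 1 := by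
          exact_mod_cast congrArg (fun z : ℤ => (z : ℝ)) h1
        rw [h2, one_mul,
          show (27:ℝ) * (Real.sqrt (Real.sqrt d))⁻¹ = 27 / Real.sqrt (Real.sqrt d) from
            (div_eq_mul_inv _ _).symm,
          le_div_iff₀ hssd0]
        exact Hf_mul_le hsq
      · rw [ArithmeticFunction.moebius_eq_zero_of_not_squarefree hsq]
        have : (0:ℝ) ≤ 27 * (Real.sqrt (Real.sqrt d))⁻¹ := by positivity
        simpa using this
    -- sum the bound over m
    have hsum_m : ∑ m ∈ Finset.Icc 1 (N / d), F (d * m) d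
        ≤ (ArithmeticFunction.moebius d : ℝ)^2 * Hf d *
            ((Real.sqrt d)⁻¹ * (2 * Real.sqrt ((N / d : ℕ) : ℝ))) := by
      calc ∑ m ∈ Finset.Icc 1 (N / d), F (d * m) d
          ≤ ∑ m ∈ Finset.Icc 1 (N / d),
              (ArithmeticFunction.moebius d : ℝ)^2 * Hf d *
                ((Real.sqrt d)⁻¹ * (Real.sqrt m)⁻¹) := Finset.sum_le_sum hterm
        _ = (ArithmeticFunction.moebius d : ℝ)^2 * Hf d * (Real.sqrt d)⁻¹ *
              ∑ m ∈ Finset.Icc 1 (N / d), (Real.sqrt m)⁻¹ := by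
            rw [Finset.mul_sum]
            apply Finset.sum_congr rfl
            intro m _
            ring
        _ ≤ (ArithmeticFunction.moebius d : ℝ)^2 * Hf d * (Real.sqrt d)⁻¹ *
              (2 * Real.sqrt ((N / d : ℕ) : ℝ)) := by
            apply mul_le_mul_of_nonneg_left (sum_inv_sqrt_le (N / d))
            have := Hf_nonneg d
            positivity
        _ = (ArithmeticFunction.moebius d : ℝ)^2 * Hf d *
              ((Real.sqrt d)⁻¹ * (2 * Real.sqrt ((N / d : ℕ) : ℝ))) := by ring
    have hNd : Real.sqrt ((N / d : ℕ) : ℝ) ≤ Real.sqrt N / Real.sqrt d := by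
      rw [← Real.sqrt_div (by positivity : (0:ℝ) ≤ (N:ℝ))]
      exact Real.sqrt_le_sqrt (Nat.cast_div_le)
    have hdd : (Real.sqrt d)⁻¹ * (Real.sqrt d)⁻¹ = ((d:ℝ))⁻¹ := by
      rw [← mul_inv, Real.mul_self_sqrt hd0.le]
    have hHf0 : (0:ℝ) ≤ (ArithmeticFunction.moebius d : ℝ)^2 * Hf d :=
      mul_nonneg (sq_nonneg _) (Hf_nonneg d)
    calc ∑ m ∈ Finset.Icc 1 (N / d), F (d * m) d
        ≤ (ArithmeticFunction.moebius d : ℝ)^2 * Hf d *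
            ((Real.sqrt d)⁻¹ * (2 * Real.sqrt ((N / d : ℕ) : ℝ))) := hsum_m
      _ ≤ (ArithmeticFunction.moebius d : ℝ)^2 * Hf d *
            ((Real.sqrt d)⁻¹ * (2 * (Real.sqrt N / Real.sqrt d))) := by
          apply mul_le_mul_of_nonneg_left _ hHf0
          apply mul_le_mul_of_nonneg_left _ (by positivity)
          linarith [hNd]
      _ = 2 * Real.sqrt N * ((ArithmeticFunction.moebius d : ℝ)^2 * Hf d) * ((d:ℝ))⁻¹ := by
          rw [← hdd]
          field_simp
      _ ≤ 2 * Real.sqrt N * (27 * (Real.sqrt (Real.sqrt d))⁻¹) * ((d:ℝ))⁻¹ := by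
          apply mul_le_mul_of_nonneg_right _ (by positivity)
          apply mul_le_mul_of_nonneg_left hmuHf (by positivity)
      _ = 2 * Real.sqrt N * (27 * (((d:ℝ) * Real.sqrt (Real.sqrt d))⁻¹)) := by
          rw [mul_inv]
          ring
  -- Step 4: sum over d
  calc ∑ d ∈ Finset.Icc 1 N, ∑ r ∈ (Finset.Icc 1 N).filter (fun r => d ∣ r), F r d
      ≤ ∑ d ∈ Finset.Icc 1 N, 2 * Real.sqrt N * (27 * (((d:ℝ) * Real.sqrt (Real.sqrt d))⁻¹)) :=
        Finset.sum_le_sum hbound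
    _ = 54 * Real.sqrt N * ∑ d ∈ Finset.Icc 1 N, ((d:ℝ) * Real.sqrt (Real.sqrt d))⁻¹ := by
        rw [Finset.mul_sum]
        apply Finset.sum_congr rfl
        intro d _
        ring
    _ ≤ 54 * Real.sqrt N * 5 := by
        apply mul_le_mul_of_nonneg_left (sum_d54_le N) (by positivity)
    _ = 270 * Real.sqrt N := by ring
    _ ≤ 270 * Real.sqrt R := by linarith [hNR]
end

section
/- There is a constant A > 0 such that for every real R ≥ 1, Σ_{0 < r ≤ R} r·d(r)/φ(r) ≤ A·R·log 2R. -/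
open Finset ArithmeticFunction

lemma aux_squarefree_prod {S : Finset ℕ} (hS : ∀ p ∈ S, p.Prime) :
    Squarefree (∏ p ∈ S, p) := by
  have hne : (∏ p ∈ S, p) ≠ 0 := Finset.prod_ne_zero_iff.2 fun p hp => (hS p hp).ne_zero
  rw [Nat.squarefree_iff_factorization_le_one hne]
  intro q
  rw [Nat.factorization_prod (fun p hp => (hS p hp).ne_zero)]
  rw [Finset.sum_apply']
  calc (∑ p ∈ S, (Nat.factorization p) q)
      = ∑ p ∈ S, if p = q then 1 else 0 := by
        refine Finset.sum_congr rfl fun p hp => ?_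
        rw [(hS p hp).factorization, Finsupp.single_apply]
    _ ≤ 1 := by
        rw [Finset.sum_ite_eq' S q (fun _ => 1)]
        split <;> simp

lemma aux_totient_prod {S : Finset ℕ} (hS : ∀ p ∈ S, p.Prime) :
    Nat.totient (∏ p ∈ S, p) = ∏ p ∈ S, (p - 1) := by
  have h := Nat.totient_eq_div_primeFactors_mul (∏ p ∈ S, p)
  rwa [Nat.primeFactors_prod hS, Nat.div_self (Finset.prod_pos fun p hp => (hS p hp).pos),
    one_mul] at h

lemma aux_ratio_eq (r : ℕ) (hr : r ≠ 0) :
    (r : ℝ) / (r.totient : ℝ) = ∏ p ∈ r.primeFactors, ((p : ℝ) / ((p : ℝ) - 1)) := by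
  have h := Nat.totient_mul_prod_primeFactors r
  have hφ : (0:ℝ) < (r.totient : ℝ) := by
    exact_mod_cast Nat.totient_pos.2 (Nat.pos_of_ne_zero hr)
  have hcast : (r.totient : ℝ) * ∏ p ∈ r.primeFactors, (p : ℝ) =
      (r : ℝ) * ∏ p ∈ r.primeFactors, ((p : ℝ) - 1) := by
    have h2 := congrArg (fun n : ℕ => (n : ℝ)) h
    push_cast at h2
    calc (r.totient : ℝ) * ∏ p ∈ r.primeFactors, (p : ℝ)
        = (r : ℝ) * ∏ p ∈ r.primeFactors, ((p - 1 : ℕ) : ℝ) := h2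
      _ = (r : ℝ) * ∏ p ∈ r.primeFactors, ((p : ℝ) - 1) := by
          congr 1
          refine Finset.prod_congr rfl fun p hp => ?_
          rw [Nat.cast_sub (Nat.prime_of_mem_primeFactors hp).one_le, Nat.cast_one]
  have hprod : (0:ℝ) < ∏ p ∈ r.primeFactors, ((p : ℝ) - 1) := by
    refine Finset.prod_pos fun p hp => ?_
    have := (Nat.prime_of_mem_primeFactors hp).two_le
    have : (2:ℝ) ≤ (p:ℝ) := by exact_mod_cast this
    linarith
  rw [Finset.prod_div_distrib]
  rw [div_eq_div_iff (ne_of_gt hφ) (ne_of_gt hprod)]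
  linarith [hcast]

lemma aux_L1 (r : ℕ) (hr : r ≠ 0) :
    (r : ℝ) / (r.totient : ℝ) ≤
      ∑ e ∈ r.divisors.filter Squarefree, 1 / (e.totient : ℝ) := by
  have hprimes : ∀ p ∈ r.primeFactors, p.Prime := fun p hp => Nat.prime_of_mem_primeFactors hp
  rw [aux_ratio_eq r hr]
  have step1 : ∏ p ∈ r.primeFactors, ((p : ℝ) / ((p : ℝ) - 1)) =
      ∑ S ∈ r.primeFactors.powerset, ∏ p ∈ S, (1 / ((p : ℝ) - 1)) := by
    have : ∀ p ∈ r.primeFactors, ((p : ℝ) / ((p : ℝ) - 1)) = 1 / ((p:ℝ)-1) + 1 := by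
      intro p hp
      have h2 : (2:ℝ) ≤ (p:ℝ) := by exact_mod_cast (hprimes p hp).two_le
      have hne : (p:ℝ) - 1 ≠ 0 := by linarith
      field_simp
      ring
    rw [Finset.prod_congr rfl this, Finset.prod_add]
    simp
  rw [step1]
  -- For each S ⊆ primeFactors, ∏ 1/(p-1) = 1/φ(∏ p)
  have hterm : ∀ S ∈ r.primeFactors.powerset,
      ∏ p ∈ S, (1 / ((p : ℝ) - 1)) = 1 / ((∏ p ∈ S, p).totient : ℝ) := by
    intro S hS
    have hSp : ∀ p ∈ S, p.Prime := fun p hp => hprimes p (Finset.mem_powerset.1 hS hp)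
    rw [aux_totient_prod hSp]
    push_cast
    rw [Finset.prod_div_distrib]
    congr 1
    · simp
    · refine Finset.prod_congr rfl fun p hp => ?_
      rw [Nat.cast_sub (hSp p hp).one_le, Nat.cast_one]
  rw [Finset.sum_congr rfl hterm]
  -- now inject S ↦ ∏ p ∈ S, p into squarefree divisors
  have hinj : ∀ x ∈ r.primeFactors.powerset, ∀ y ∈ r.primeFactors.powerset,
      (∏ p ∈ x, p) = (∏ p ∈ y, p) → x = y := by
    intro S hS T hT hST
    have hSp : ∀ p ∈ S, p.Prime := fun p hp => hprimes p (Finset.mem_powerset.1 hS hp)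
    have hTp : ∀ p ∈ T, p.Prime := fun p hp => hprimes p (Finset.mem_powerset.1 hT hp)
    have := congrArg Nat.primeFactors hST
    rwa [Nat.primeFactors_prod hSp, Nat.primeFactors_prod hTp] at this
  refine le_trans (le_of_eq
    (Finset.sum_image (f := fun e : ℕ => 1 / (e.totient : ℝ)) hinj).symm) ?_
  refine Finset.sum_le_sum_of_subset_of_nonneg ?_ (fun e _ _ => by positivity)
  intro e he
  rw [Finset.mem_image] at he
  obtain ⟨S, hS, rfl⟩ := he
  have hSp : ∀ p ∈ S, p.Prime := fun p hp => hprimes p (Finset.mem_powerset.1 hS hp)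
  rw [Finset.mem_filter, Nat.mem_divisors]
  refine ⟨⟨?_, hr⟩, aux_squarefree_prod hSp⟩
  exact dvd_trans (Finset.prod_dvd_prod_of_subset _ _ _ (Finset.mem_powerset.1 hS))
      (Nat.prod_primeFactors_dvd r)

lemma aux_swap (N : ℕ) (f : ℕ → ℕ → ℝ) :
    ∑ r ∈ Icc 1 N, ∑ d ∈ r.divisors, f d r
      = ∑ d ∈ Icc 1 N, ∑ m ∈ Icc 1 (N / d), f d (d * m) := by
  rw [Finset.sum_sigma', Finset.sum_sigma']
  refine Finset.sum_nbij' (fun a => ⟨a.2, a.1 / a.2⟩) (fun b => ⟨b.1 * b.2, b.1⟩)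
    ?_ ?_ ?_ ?_ ?_
  · rintro ⟨r, d⟩ h
    simp only [Finset.mem_sigma, Finset.mem_Icc, Nat.mem_divisors] at h ⊢
    obtain ⟨⟨h1, h2⟩, hd, hr0⟩ := h
    have hd0 : 0 < d := Nat.pos_of_dvd_of_pos hd (by omega)
    refine ⟨⟨hd0, le_trans (Nat.le_of_dvd (by omega) hd) h2⟩, ?_, ?_⟩
    · exact Nat.one_le_div_iff hd0 |>.2 (Nat.le_of_dvd (by omega) hd)
    · exact Nat.div_le_div_right h2
  · rintro ⟨d, m⟩ h
    simp only [Finset.mem_sigma, Finset.mem_Icc, Nat.mem_divisors] at h ⊢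
    obtain ⟨⟨h1, h2⟩, hm1, hm2⟩ := h
    refine ⟨⟨?_, ?_⟩, ⟨Dvd.intro m rfl, by positivity⟩⟩
    · exact Nat.one_le_iff_ne_zero.2 (by positivity)
    · have := (Nat.le_div_iff_mul_le (k := d) (by omega)).1 hm2
      calc d * m = m * d := mul_comm _ _
        _ ≤ N := this
  · rintro ⟨r, d⟩ h
    simp only [Finset.mem_sigma, Finset.mem_Icc, Nat.mem_divisors] at h
    obtain ⟨⟨h1, h2⟩, hd, hr0⟩ := h
    simp only [Sigma.mk.inj_iff]
    exact ⟨Nat.mul_div_cancel' hd, heq_of_eq rfl⟩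
  · rintro ⟨d, m⟩ h
    simp only [Finset.mem_sigma, Finset.mem_Icc] at h
    have : d * m / d = m := Nat.mul_div_cancel_left m (by omega)
    simp [this]
  · rintro ⟨r, d⟩ h
    simp only [Finset.mem_sigma, Finset.mem_Icc, Nat.mem_divisors] at h
    obtain ⟨⟨h1, h2⟩, hd, hr0⟩ := h
    simp only []
    rw [Nat.mul_div_cancel' hd]

lemma aux_subm (a b : ℕ) : ((a * b).divisors.card : ℝ) ≤ (a.divisors.card : ℝ) * (b.divisors.card : ℝ) := by
  rw [← Nat.cast_mul]
  exact_mod_cast (by rw [Nat.divisors_mul]; exact Finset.card_mul_le : (a*b).divisors.card ≤ a.divisors.card * b.divisors.card)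

lemma aux_divsum (M : ℕ) :
    ∑ m ∈ Icc 1 M, ((m.divisors.card : ℝ)) ≤ (M : ℝ) * (1 + Real.log M) := by
  have key : ∀ m ∈ Icc 1 M, (m.divisors.card : ℝ) =
      ∑ k ∈ Icc 1 M, (if k ∣ m then (1:ℝ) else 0) := by
    intro m hm
    rw [Finset.mem_Icc] at hm
    rw [← Finset.sum_filter]
    simp only [Finset.sum_const, nsmul_eq_mul, mul_one]
    congr 2
    apply Finset.ext
    intro d
    simp only [Nat.mem_divisors, Finset.mem_filter, Finset.mem_Icc]
    constructor
    · rintro ⟨hd, h0⟩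
      exact ⟨⟨Nat.pos_of_dvd_of_pos hd (by omega), le_trans (Nat.le_of_dvd (by omega) hd) hm.2⟩, hd⟩
    · rintro ⟨⟨h1, h2⟩, hd⟩
      exact ⟨hd, by omega⟩
  rw [Finset.sum_congr rfl key, Finset.sum_comm]
  have inner : ∀ k ∈ Icc 1 M, ∑ m ∈ Icc 1 M, (if k ∣ m then (1:ℝ) else 0) ≤ (M : ℝ) / k := by
    intro k hk
    rw [Finset.mem_Icc] at hk
    rw [← Finset.sum_filter]
    simp only [Finset.sum_const, nsmul_eq_mul, mul_one]
    have : Finset.Icc 1 M = Finset.Ioc 0 M := rfl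
    rw [this, Nat.Ioc_filter_dvd_card_eq_div]
    exact Nat.cast_div_le
  refine le_trans (Finset.sum_le_sum inner) ?_
  have : ∑ k ∈ Icc 1 M, (M : ℝ) / k = (M:ℝ) * ∑ k ∈ Icc 1 M, (k:ℝ)⁻¹ := by
    rw [Finset.mul_sum]
    exact Finset.sum_congr rfl fun k _ => div_eq_mul_inv _ _
  rw [this]
  have hh : ∑ k ∈ Icc 1 M, ((k:ℝ))⁻¹ ≤ 1 + Real.log M := by
    have h1 : ((harmonic M : ℚ) : ℝ) = ∑ k ∈ Icc 1 M, ((k:ℝ))⁻¹ := by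
      rw [harmonic_eq_sum_Icc]
      push_cast
      rfl
    rw [← h1]
    exact harmonic_le_one_add_log M
  exact mul_le_mul_of_nonneg_left hh (by positivity)

lemma aux_tel (N : ℕ) : ∑ n ∈ Icc 2 N, 1 / ((n:ℝ) * ((n:ℝ) - 1)) ≤ 1 := by
  have key : ∀ N : ℕ, 1 ≤ N → ∑ n ∈ Icc 2 N, 1 / ((n:ℝ) * ((n:ℝ) - 1)) ≤ 1 - 1/(N:ℝ) := by
    intro N hN
    induction N, hN using Nat.le_induction with
    | base => simp
    | succ n hn ih =>
      rw [Finset.sum_Icc_succ_top (by omega : 2 ≤ n + 1)]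
      have h1 : (1:ℝ) ≤ (n:ℝ) := by exact_mod_cast hn
      have h2 : ((n:ℕ)+1 : ℝ) ≠ 0 := by push_cast; linarith
      have : 1 / (((n:ℕ)+1:ℝ) * (((n:ℕ)+1:ℝ) - 1)) = 1/(n:ℝ) - 1/((n:ℝ)+1) := by
        push_cast
        rw [div_sub_div _ _ (by linarith) (by linarith)]
        congr 1 <;> ring
      push_cast at this ⊢
      rw [this]
      linarith
  rcases Nat.lt_or_ge N 2 with h | h
  · interval_cases N <;> simp
  · have := key N (by omega)
    have hN : (0:ℝ) < N := by exact_mod_cast (by omega : 0 < N)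
    have : 1/(N:ℝ) > 0 := by positivity
    linarith [key N (by omega)]

lemma aux_sqfree_term (d : ℕ) (hd : Squarefree d) :
    ((d.divisors.card : ℝ)) / ((d:ℝ) * (d.totient : ℝ)) =
      ∏ p ∈ d.primeFactors, (2 / ((p:ℝ) * ((p:ℝ) - 1))) := by
  have hd0 : d ≠ 0 := hd.ne_zero
  have hprimes : ∀ p ∈ d.primeFactors, p.Prime := fun p hp => Nat.prime_of_mem_primeFactors hp
  have hcard : (d.divisors.card : ℝ) = ∏ p ∈ d.primeFactors, (2:ℝ) := by
    rw [Nat.card_divisors hd0]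
    push_cast
    refine Finset.prod_congr rfl fun p hp => ?_
    rw [Nat.factorization_eq_one_of_squarefree hd (hprimes p hp) (Nat.dvd_of_mem_primeFactors hp)]
    norm_num
  have hdprod : (d : ℝ) = ∏ p ∈ d.primeFactors, (p:ℝ) := by
    conv_lhs => rw [← Nat.prod_primeFactors_of_squarefree hd]
    push_cast
    rfl
  have hφ : (d.totient : ℝ) = ∏ p ∈ d.primeFactors, ((p:ℝ) - 1) := by
    conv_lhs => rw [← Nat.prod_primeFactors_of_squarefree hd]
    rw [aux_totient_prod hprimes]
    push_cast
    refine Finset.prod_congr rfl fun p hp => ?_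
    rw [Nat.cast_sub (hprimes p hp).one_le, Nat.cast_one]
  rw [hcard, hdprod, hφ, ← Finset.prod_mul_distrib, ← Finset.prod_div_distrib]

lemma aux_L5 (N : ℕ) :
    ∑ d ∈ (Icc 1 N).filter Squarefree, ((d.divisors.card : ℝ)) / ((d:ℝ) * (d.totient : ℝ))
      ≤ Real.exp 2 := by
  set h : ℕ → ℝ := fun p => 2 / ((p:ℝ) * ((p:ℝ) - 1)) with hh
  have hnonneg : ∀ p ∈ (N+1).primesBelow, 0 ≤ h p := by
    intro p hp
    have hp2 : 2 ≤ p := (Nat.prime_of_mem_primesBelow hp).two_le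
    have : (2:ℝ) ≤ (p:ℝ) := by exact_mod_cast hp2
    have : (0:ℝ) < (p:ℝ) * ((p:ℝ)-1) := by nlinarith
    positivity
  have step1 : ∑ d ∈ (Icc 1 N).filter Squarefree, ((d.divisors.card : ℝ)) / ((d:ℝ) * (d.totient : ℝ))
      = ∑ d ∈ (Icc 1 N).filter Squarefree, ∏ p ∈ d.primeFactors, h p := by
    refine Finset.sum_congr rfl fun d hd => ?_
    rw [Finset.mem_filter] at hd
    exact aux_sqfree_term d hd.2
  rw [step1]
  -- inject via primeFactors into powerset of primesBelow (N+1)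
  have hinj : ∀ x ∈ (Icc 1 N).filter Squarefree, ∀ y ∈ (Icc 1 N).filter Squarefree,
      x.primeFactors = y.primeFactors → x = y := by
    intro x hx y hy hxy
    rw [Finset.mem_filter] at hx hy
    have := congrArg (fun S : Finset ℕ => ∏ p ∈ S, p) hxy
    simpa [Nat.prod_primeFactors_of_squarefree hx.2,
      Nat.prod_primeFactors_of_squarefree hy.2] using this
  have step2 : ∑ d ∈ (Icc 1 N).filter Squarefree, ∏ p ∈ d.primeFactors, h p
      ≤ ∑ S ∈ ((N+1).primesBelow).powerset, ∏ p ∈ S, h p := by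
    refine le_trans (le_of_eq
      (Finset.sum_image (f := fun S : Finset ℕ => ∏ p ∈ S, h p) hinj).symm) ?_
    refine Finset.sum_le_sum_of_subset_of_nonneg ?_ ?_
    · intro S hS
      rw [Finset.mem_image] at hS
      obtain ⟨d, hd, rfl⟩ := hS
      rw [Finset.mem_filter, Finset.mem_Icc] at hd
      rw [Finset.mem_powerset]
      intro p hp
      have hpp := Nat.prime_of_mem_primeFactors hp
      have hpd := Nat.le_of_dvd (by omega) (Nat.dvd_of_mem_primeFactors hp)
      exact Nat.mem_primesBelow.2 ⟨by omega, hpp⟩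
    · intro S hS _
      rw [Finset.mem_powerset] at hS
      exact Finset.prod_nonneg fun p hp => hnonneg p (hS hp)
  refine le_trans step2 ?_
  have step3 : ∑ S ∈ ((N+1).primesBelow).powerset, ∏ p ∈ S, h p
      = ∏ p ∈ (N+1).primesBelow, (1 + h p) := by
    have := Finset.prod_add h (fun _ => (1:ℝ)) ((N+1).primesBelow)
    simp only [Finset.prod_const_one, mul_one] at this
    rw [← this]
    exact Finset.prod_congr rfl fun p _ => add_comm _ _
  rw [step3]
  have step4 : ∏ p ∈ (N+1).primesBelow, (1 + h p) ≤ Real.exp (∑ p ∈ (N+1).primesBelow, h p) := by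
    rw [Real.exp_sum]
    refine Finset.prod_le_prod (fun p hp => by linarith [hnonneg p hp]) ?_
    intro p hp
    have := Real.add_one_le_exp (h p)
    linarith
  refine le_trans step4 ?_
  rw [Real.exp_le_exp]
  -- Σ over primes ≤ Σ over Icc 2 N of 2/(n(n-1)) ≤ 2
  have hsub : (N+1).primesBelow ⊆ Icc 2 N := by
    intro p hp
    rw [Nat.mem_primesBelow] at hp
    rw [Finset.mem_Icc]
    exact ⟨hp.2.two_le, by omega⟩
  calc ∑ p ∈ (N+1).primesBelow, h p
      ≤ ∑ n ∈ Icc 2 N, h n := by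
        refine Finset.sum_le_sum_of_subset_of_nonneg hsub ?_
        intro n hn _
        rw [Finset.mem_Icc] at hn
        have : (2:ℝ) ≤ (n:ℝ) := by exact_mod_cast hn.1
        have : (0:ℝ) < (n:ℝ) * ((n:ℝ)-1) := by nlinarith
        rw [hh]
        positivity
    _ = 2 * ∑ n ∈ Icc 2 N, 1 / ((n:ℝ) * ((n:ℝ) - 1)) := by
        rw [Finset.mul_sum]
        refine Finset.sum_congr rfl fun n _ => ?_
        rw [hh]
        ring
    _ ≤ 2 := by linarith [aux_tel N]

theorem lemma9_divisor_sum :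
    ∃ A : ℝ, 0 < A ∧ ∀ R : ℝ, 1 ≤ R →
      (∑ r ∈ Finset.Icc 1 ⌊R⌋₊, (r : ℝ) * (r.divisors.card : ℝ) / (r.totient : ℝ))
        ≤ A * R * Real.log (2 * R) := by
  refine ⟨Real.exp 2 * (1 + (Real.log 2)⁻¹), by positivity, ?_⟩
  intro R hR
  set N := ⌊R⌋₊ with hN
  have hN1 : 1 ≤ N := Nat.le_floor (by exact_mod_cast hR)
  have hNR : (N : ℝ) ≤ R := Nat.floor_le (by linarith)
  -- the function for the swap
  set F : ℕ → ℕ → ℝ := fun e r =>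
    if Squarefree e then (r.divisors.card : ℝ) / (e.totient : ℝ) else 0 with hF
  -- Step A : pointwise bound
  have stepA : (∑ r ∈ Finset.Icc 1 N, (r : ℝ) * (r.divisors.card : ℝ) / (r.totient : ℝ))
      ≤ ∑ r ∈ Icc 1 N, ∑ e ∈ r.divisors, F e r := by
    refine Finset.sum_le_sum fun r hr => ?_
    rw [Finset.mem_Icc] at hr
    have hr0 : r ≠ 0 := by omega
    have h1 := aux_L1 r hr0
    have hcd : (0:ℝ) ≤ (r.divisors.card : ℝ) := by positivity
    calc (r : ℝ) * (r.divisors.card : ℝ) / (r.totient : ℝ)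
        = (r.divisors.card : ℝ) * ((r : ℝ) / (r.totient : ℝ)) := by ring
      _ ≤ (r.divisors.card : ℝ) * ∑ e ∈ r.divisors.filter Squarefree, 1 / (e.totient : ℝ) :=
          mul_le_mul_of_nonneg_left h1 hcd
      _ = ∑ e ∈ r.divisors.filter Squarefree, (r.divisors.card : ℝ) / (e.totient : ℝ) := by
          rw [Finset.mul_sum]
          exact Finset.sum_congr rfl fun e _ => by ring
      _ = ∑ e ∈ r.divisors, F e r := by
          rw [Finset.sum_filter]
  -- Step B : swap
  rw [aux_swap N F] at stepA
  -- Step C : bound inner sums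
  have hlogN : 0 ≤ Real.log N := Real.log_nonneg (by exact_mod_cast hN1)
  have stepC : ∑ d ∈ Icc 1 N, ∑ m ∈ Icc 1 (N / d), F d (d * m)
      ≤ (N : ℝ) * (1 + Real.log N) *
        ∑ d ∈ (Icc 1 N).filter Squarefree, ((d.divisors.card : ℝ)) / ((d:ℝ) * (d.totient : ℝ)) := by
    rw [Finset.mul_sum, Finset.sum_filter]
    refine Finset.sum_le_sum fun d hd => ?_
    rw [Finset.mem_Icc] at hd
    have hd0 : (0:ℝ) < (d:ℝ) := by exact_mod_cast (by omega : 0 < d)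
    have hφ0 : (0:ℝ) < (d.totient : ℝ) := by
      exact_mod_cast Nat.totient_pos.2 (by omega : 0 < d)
    by_cases hsq : Squarefree d
    · simp only [hF, hsq, if_true]
      have inner1 : ∑ m ∈ Icc 1 (N / d), ((d * m).divisors.card : ℝ) / (d.totient : ℝ)
          ≤ (d.divisors.card : ℝ) / (d.totient : ℝ) * ∑ m ∈ Icc 1 (N / d), (m.divisors.card : ℝ) := by
        rw [Finset.mul_sum]
        refine Finset.sum_le_sum fun m hm => ?_
        have := aux_subm d m
        rw [div_mul_eq_mul_div, div_le_div_iff_of_pos_right hφ0]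
        exact this
      refine le_trans inner1 ?_
      have h2 : ∑ m ∈ Icc 1 (N / d), (m.divisors.card : ℝ) ≤ ((N:ℝ)/d) * (1 + Real.log N) := by
        refine le_trans (aux_divsum (N / d)) ?_
        have ha : ((N / d : ℕ) : ℝ) ≤ (N:ℝ)/d := Nat.cast_div_le
        have hb1 : 1 ≤ N / d := (Nat.one_le_div_iff (by omega)).2 hd.2
        have hb2 : (1:ℝ) ≤ ((N / d : ℕ) : ℝ) := by exact_mod_cast hb1
        have hb : Real.log ((N / d : ℕ)) ≤ Real.log N := by
          refine Real.log_le_log (by linarith) ?_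
          exact_mod_cast Nat.div_le_self N d
        have hd' : (0:ℝ) ≤ 1 + Real.log ((N / d : ℕ)) := by
          have := Real.log_nonneg hb2
          linarith
        exact mul_le_mul ha (by linarith) hd' (by positivity)
      have hfrac : (0:ℝ) ≤ (d.divisors.card : ℝ) / (d.totient : ℝ) := by positivity
      refine le_trans (mul_le_mul_of_nonneg_left h2 hfrac) (le_of_eq ?_)
      field_simp
    · simp [hF, hsq]
  have stepD := aux_L5 N
  have hpos : (0:ℝ) ≤ (N : ℝ) * (1 + Real.log N) := by positivity
  have total : (∑ r ∈ Finset.Icc 1 N, (r : ℝ) * (r.divisors.card : ℝ) / (r.totient : ℝ))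
      ≤ (N : ℝ) * (1 + Real.log N) * Real.exp 2 :=
    le_trans stepA (le_trans stepC (mul_le_mul_of_nonneg_left stepD hpos))
  refine le_trans total ?_
  -- final constant manipulation
  have hlog2 : (0:ℝ) < Real.log 2 := Real.log_pos (by norm_num)
  have h2R : Real.log (2 * R) = Real.log 2 + Real.log R := Real.log_mul (by norm_num) (by linarith)
  have hlogR : 0 ≤ Real.log R := Real.log_nonneg hR
  have key : (1 + Real.log N) ≤ (1 + (Real.log 2)⁻¹) * Real.log (2 * R) := by
    have h1 : Real.log N ≤ Real.log R := Real.log_le_log (by exact_mod_cast (by omega : 0 < N)) hNR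
    have h2 : (1:ℝ) ≤ (Real.log 2)⁻¹ * Real.log (2 * R) := by
      rw [h2R]
      calc (1:ℝ) = (Real.log 2)⁻¹ * Real.log 2 := by field_simp
        _ ≤ (Real.log 2)⁻¹ * (Real.log 2 + Real.log R) := by
            exact mul_le_mul_of_nonneg_left (by linarith) (by positivity)
    have h3 : Real.log R ≤ Real.log (2 * R) := by rw [h2R]; linarith
    calc 1 + Real.log N ≤ (Real.log 2)⁻¹ * Real.log (2*R) + Real.log (2*R) := by linarith
      _ = (1 + (Real.log 2)⁻¹) * Real.log (2 * R) := by ring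
  have hlog2R : 0 ≤ Real.log (2 * R) := by rw [h2R]; linarith
  calc (N : ℝ) * (1 + Real.log N) * Real.exp 2
      ≤ R * ((1 + (Real.log 2)⁻¹) * Real.log (2 * R)) * Real.exp 2 := by
        refine mul_le_mul_of_nonneg_right ?_ (le_of_lt (Real.exp_pos 2))
        refine mul_le_mul hNR key (by positivity) (by linarith)
    _ = Real.exp 2 * (1 + (Real.log 2)⁻¹) * R * Real.log (2 * R) := by ring
end

section
/- There is a constant A > 0 such that for every real R ≥ 3 and every positive integer n, |λ_R(n)| ≤ A·d(n)·(log R)·(log log R). -/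
open Finset ArithmeticFunction

private lemma sum_le_sum_inj {α β : Type*} [DecidableEq β] {s : Finset α} {t : Finset β}
    {f : α → ℝ} {g : β → ℝ} (e : α → β) (he : Set.InjOn e s) (hmem : ∀ a ∈ s, e a ∈ t)
    (hle : ∀ a ∈ s, f a ≤ g (e a)) (hg : ∀ b ∈ t, 0 ≤ g b) :
    ∑ a ∈ s, f a ≤ ∑ b ∈ t, g b := by
  calc ∑ a ∈ s, f a ≤ ∑ a ∈ s, g (e a) := Finset.sum_le_sum hle
    _ = ∑ b ∈ s.image e, g b := (Finset.sum_image (fun x hx y hy h => he hx hy h)).symm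
    _ ≤ ∑ b ∈ t, g b := Finset.sum_le_sum_of_subset_of_nonneg
        (Finset.image_subset_iff.mpr hmem) (fun b hb _ => hg b hb)

private lemma sqfree_prod_primes {s : Finset ℕ} (hs : ∀ p ∈ s, p.Prime) :
    Squarefree (∏ p ∈ s, p) := by
  induction s using Finset.cons_induction with
  | empty => simpa using squarefree_one
  | cons a s ha ih =>
    rw [Finset.prod_cons]
    have hcop : Nat.Coprime a (∏ p ∈ s, p) :=
      Nat.Coprime.prod_right fun p hp =>
        (Nat.coprime_primes (hs a (Finset.mem_cons_self a s)) (hs p (Finset.mem_cons_of_mem hp))).mpr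
          (fun h => ha (h ▸ hp))
    rw [Nat.squarefree_mul hcop]
    exact ⟨(hs a (Finset.mem_cons_self a s)).squarefree, ih fun p hp => hs p (Finset.mem_cons_of_mem hp)⟩

private lemma natphi_eq_prod {d : ℕ} (hd : Squarefree d) :
    d.totient = ∏ p ∈ d.primeFactors, (p - 1) := by
  have h := Nat.totient_mul_prod_primeFactors d
  rw [Nat.prod_primeFactors_of_squarefree hd] at h
  have hd0 : 0 < d := hd.ne_zero.bot_lt
  rw [mul_comm d _] at h
  exact Nat.eq_of_mul_eq_mul_right hd0 h

private lemma phi_eq_prod {d : ℕ} (hd : Squarefree d) :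
    (d.totient : ℝ) = ∏ p ∈ d.primeFactors, ((p : ℝ) - 1) := by
  rw [natphi_eq_prod hd]
  push_cast
  refine Finset.prod_congr rfl fun p hp => ?_
  have : 1 ≤ p := (Nat.prime_of_mem_primeFactors hp).one_lt.le
  rw [Nat.cast_sub this, Nat.cast_one]

private lemma inner_abs {g : ℕ} (hg : Squarefree g) :
    |∑ d ∈ g.divisors, (d : ℝ) * (moebius d : ℝ)| = (g.totient : ℝ) := by
  have h := ArithmeticFunction.IsMultiplicative.prodPrimeFactors_one_sub_of_squarefree
    (↑(ArithmeticFunction.id) : ArithmeticFunction ℝ)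
    (ArithmeticFunction.isMultiplicative_id.natCast) hg
  simp only [natCoe_apply, ArithmeticFunction.id_apply] at h
  have hsum : ∑ d ∈ g.divisors, (d : ℝ) * (moebius d : ℝ)
      = ∏ p ∈ g.primeFactors, (1 - (p : ℝ)) := by
    rw [h]; exact Finset.sum_congr rfl fun d _ => by push_cast; ring
  rw [hsum, Finset.abs_prod, phi_eq_prod hg]
  refine Finset.prod_congr rfl fun p hp => ?_
  have h2 : (2 : ℝ) ≤ p := by exact_mod_cast (Nat.prime_of_mem_primeFactors hp).two_le
  rw [abs_of_nonpos (by linarith)]; ring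

private noncomputable def invphi : ArithmeticFunction ℝ :=
  ⟨fun d => (d.totient : ℝ)⁻¹, by simp⟩

private lemma invphi_apply (d : ℕ) : invphi d = (d.totient : ℝ)⁻¹ := rfl

private lemma invphi_mult : invphi.IsMultiplicative := by
  constructor
  · simp [invphi_apply, Nat.totient_one]
  · intro m n h
    simp [invphi_apply, Nat.totient_mul h, mul_inv, mul_comm]

/-- `1/φ(m) ≤ (1/m) ∑_{d ∣ m, d squarefree} 1/φ(d)`. -/
private lemma inv_phi_le (m : ℕ) (hm : m ≠ 0) :
    ((m.totient : ℝ))⁻¹ ≤ (m : ℝ)⁻¹ *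
      ∑ d ∈ m.divisors, (if Squarefree d then ((d.totient : ℝ))⁻¹ else 0) := by
  set k := ∏ p ∈ m.primeFactors, p with hk_def
  have hkp : ∀ p ∈ m.primeFactors, p.Prime := fun p hp => Nat.prime_of_mem_primeFactors hp
  have hk : Squarefree k := sqfree_prod_primes hkp
  have hpf : k.primeFactors = m.primeFactors := Nat.primeFactors_prod hkp
  have key : ∏ p ∈ m.primeFactors, (1 + invphi p) = ∑ d ∈ k.divisors, invphi d := by
    rw [← hpf]
    exact invphi_mult.prodPrimeFactors_one_add_of_squarefree hk
  -- `φ(m) * ∏ (1 + 1/(p-1)) = m`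
  have hprodpos : ∀ p ∈ m.primeFactors, (0:ℝ) < (p:ℝ) - 1 := fun p hp => by
    have : (2:ℝ) ≤ p := by exact_mod_cast (hkp p hp).two_le
    linarith
  have h1 : (m.totient : ℝ) * ∏ p ∈ m.primeFactors, (p : ℝ) =
      (m : ℝ) * ∏ p ∈ m.primeFactors, ((p : ℝ) - 1) := by
    have := Nat.totient_mul_prod_primeFactors m
    have := congrArg (fun x : ℕ => (x : ℝ)) this
    push_cast at this
    convert this using 2
    refine (Finset.prod_congr rfl fun p hp => ?_)
    have : 1 ≤ p := (hkp p hp).one_lt.le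
    rw [Nat.cast_sub this, Nat.cast_one]
  have h2 : (∏ p ∈ m.primeFactors, (1 + invphi p)) * ∏ p ∈ m.primeFactors, ((p:ℝ) - 1) =
      ∏ p ∈ m.primeFactors, (p : ℝ) := by
    rw [← Finset.prod_mul_distrib]
    refine Finset.prod_congr rfl fun p hp => ?_
    rw [invphi_apply, Nat.totient_prime (hkp p hp)]
    have h1p : 1 ≤ p := (hkp p hp).one_lt.le
    rw [Nat.cast_sub h1p, Nat.cast_one]
    have hne : (p:ℝ) - 1 ≠ 0 := (hprodpos p hp).ne'
    field_simp
    ring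
  have hQpos : (0:ℝ) < ∏ p ∈ m.primeFactors, ((p:ℝ) - 1) := Finset.prod_pos hprodpos
  have hmain : (m.totient : ℝ) * ∏ p ∈ m.primeFactors, (1 + invphi p) = m := by
    have heq : ((m.totient : ℝ) * ∏ p ∈ m.primeFactors, (1 + invphi p)) *
        (∏ p ∈ m.primeFactors, ((p:ℝ) - 1)) = (m : ℝ) * (∏ p ∈ m.primeFactors, ((p:ℝ) - 1)) := by
      rw [mul_assoc, h2, h1]
    exact mul_right_cancel₀ hQpos.ne' heq
  have hφpos : (0:ℝ) < m.totient := by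
    exact_mod_cast Nat.totient_pos.mpr (Nat.pos_of_ne_zero hm)
  have hmpos : (0:ℝ) < m := by exact_mod_cast Nat.pos_of_ne_zero hm
  have step : ((m.totient : ℝ))⁻¹ = (m : ℝ)⁻¹ * ∑ d ∈ k.divisors, invphi d := by
    rw [← key]
    field_simp
    rw [mul_comm]
    linarith [hmain]
  rw [step]
  refine mul_le_mul_of_nonneg_left ?_ (inv_nonneg.mpr hmpos.le)
  calc ∑ d ∈ k.divisors, invphi d
      = ∑ d ∈ k.divisors, (if Squarefree d then ((d.totient : ℝ))⁻¹ else 0) := by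
        refine Finset.sum_congr rfl fun d hd => ?_
        have : Squarefree d := hk.squarefree_of_dvd (Nat.dvd_of_mem_divisors hd)
        rw [if_pos this, invphi_apply]
    _ ≤ ∑ d ∈ m.divisors, (if Squarefree d then ((d.totient : ℝ))⁻¹ else 0) := by
        refine Finset.sum_le_sum_of_subset_of_nonneg
          (Nat.divisors_subset_of_dvd hm (Nat.prod_primeFactors_dvd m)) fun d _ _ => ?_
        positivity

private lemma card_divisors_sqfree {d : ℕ} (hd : Squarefree d) :
    d.divisors.card = 2 ^ d.primeFactors.card := by
  have hkp : ∀ p ∈ d.primeFactors, p.Prime := fun p hp => Nat.prime_of_mem_primeFactors hp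
  have h := (isMultiplicative_sigma (k := 0)).map_prod_of_subset_primeFactors d d.primeFactors
    (subset_refl _)
  rw [Nat.prod_primeFactors_of_squarefree hd] at h
  rw [← ArithmeticFunction.sigma_zero_apply, h]
  rw [Finset.prod_congr rfl fun p hp => ?_, Finset.prod_const]
  rw [ArithmeticFunction.sigma_zero_apply, (hkp p hp).divisors]
  rw [Finset.card_insert_of_notMem (by simp [(hkp p hp).one_lt.ne]), Finset.card_singleton]

private lemma le_phi_mul_card {d : ℕ} (hd : Squarefree d) :
    d ≤ d.totient * d.divisors.card := by
  rw [card_divisors_sqfree hd, natphi_eq_prod hd]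
  calc d = ∏ p ∈ d.primeFactors, p := (Nat.prod_primeFactors_of_squarefree hd).symm
    _ ≤ ∏ p ∈ d.primeFactors, ((p - 1) * 2) := Finset.prod_le_prod' fun p hp => by
        have := (Nat.prime_of_mem_primeFactors hp).two_le
        omega
    _ = (∏ p ∈ d.primeFactors, (p - 1)) * 2 ^ d.primeFactors.card := by
        rw [Finset.prod_mul_distrib, Finset.prod_const]

private lemma card_antidiag (d : ℕ) : d.divisorsAntidiagonal.card = d.divisors.card := by
  rw [← Nat.image_fst_divisorsAntidiagonal (n := d)]
  symm
  apply Finset.card_image_of_injOn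
  intro x hx y hy hxy
  have hx' := Nat.mem_divisorsAntidiagonal.mp hx
  have hy' := Nat.mem_divisorsAntidiagonal.mp hy
  have hx1 : x.1 ≠ 0 := (Nat.ne_zero_of_mem_divisorsAntidiagonal hx).1
  ext
  · exact hxy
  · have : x.1 * x.2 = x.1 * y.2 := by rw [hx'.1, hxy, hy'.1]
    exact Nat.eq_of_mul_eq_mul_left (Nat.pos_of_ne_zero hx1) this

private lemma sum_inv_sq_le (M : ℕ) : ∑ a ∈ Icc 1 M, ((a : ℝ) ^ 2)⁻¹ ≤ 2 := by
  have key : ∀ N : ℕ, 1 ≤ N → ∑ a ∈ Icc 1 N, ((a : ℝ) ^ 2)⁻¹ ≤ 2 - (N : ℝ)⁻¹ := by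
    intro N hN
    induction N with
    | zero => omega
    | succ N ih =>
      rcases Nat.eq_or_lt_of_le hN with h1 | h2
      · rw [← h1]; norm_num
      · have hN1 : 1 ≤ N := by omega
        rw [Finset.sum_Icc_succ_top (by omega)]
        have hNpos : (0:ℝ) < N := by exact_mod_cast hN1
        have hN1pos : (0:ℝ) < (N:ℝ) + 1 := by linarith
        have step : (((N:ℝ) + 1) ^ 2)⁻¹ ≤ (N:ℝ)⁻¹ - ((N:ℝ) + 1)⁻¹ := by
          rw [inv_eq_one_div, inv_eq_one_div, inv_eq_one_div,
            div_sub_div _ _ hNpos.ne' hN1pos.ne']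
          rw [div_le_div_iff₀ (by positivity) (by positivity)]
          ring_nf
          nlinarith
        have := ih hN1
        push_cast
        linarith
  rcases Nat.eq_zero_or_pos M with h | h
  · simp [h]
  · have h2 : (0:ℝ) ≤ (M:ℝ)⁻¹ := by positivity
    linarith [key M h]

private lemma sum_inv_le_harmonic (M : ℕ) :
    ∑ e ∈ Icc 1 M, ((e : ℝ))⁻¹ ≤ 1 + Real.log M := by
  have h1 : ∑ e ∈ Icc 1 M, ((e : ℝ))⁻¹ = ((harmonic M : ℚ) : ℝ) := by
    rw [harmonic_eq_sum_Icc]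
    push_cast
    rfl
  rw [h1]
  exact_mod_cast harmonic_le_one_add_log M

/-- The key estimate `∑_{m ≤ M} 1/φ(m) ≤ 4(1 + log M)`. -/
private lemma sum_inv_totient_le (M : ℕ) :
    ∑ m ∈ Icc 1 M, ((m.totient : ℝ))⁻¹ ≤ 4 * (1 + Real.log M) := by
  have hlog : 0 ≤ Real.log M := Real.log_natCast_nonneg M
  -- step 1: pointwise bound by a triple sum
  have step1 : ∀ m ∈ Icc 1 M, ((m.totient : ℝ))⁻¹ ≤
      ∑ d ∈ m.divisors, ∑ x ∈ d.divisorsAntidiagonal, (m : ℝ)⁻¹ * (d : ℝ)⁻¹ := by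
    intro m hm
    have hm0 : m ≠ 0 := by have := (Finset.mem_Icc.mp hm).1; omega
    refine (inv_phi_le m hm0).trans ?_
    rw [Finset.mul_sum]
    refine Finset.sum_le_sum fun d hd => ?_
    have hd0 : d ≠ 0 := Nat.pos_of_mem_divisors hd |>.ne'
    by_cases hsq : Squarefree d
    · rw [if_pos hsq]
      have hdpos : (0:ℝ) < d := by exact_mod_cast Nat.pos_of_ne_zero hd0
      have hφpos : (0:ℝ) < d.totient := by
        exact_mod_cast Nat.totient_pos.mpr (Nat.pos_of_ne_zero hd0)
      have hcard : (d : ℝ) ≤ (d.totient : ℝ) * (d.divisors.card : ℝ) := by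
        exact_mod_cast le_phi_mul_card hsq
      have hmpos : (0:ℝ) < m := by exact_mod_cast Nat.pos_of_ne_zero hm0
      have key : ((d.totient : ℝ))⁻¹ ≤ (d.divisors.card : ℝ) * (d : ℝ)⁻¹ := by
        rw [← div_eq_mul_inv, ← one_div, div_le_div_iff₀ hφpos hdpos]
        nlinarith
      calc (m : ℝ)⁻¹ * ((d.totient : ℝ))⁻¹
          ≤ (m : ℝ)⁻¹ * ((d.divisors.card : ℝ) * (d : ℝ)⁻¹) := by
            exact mul_le_mul_of_nonneg_left key (by positivity)
        _ = ∑ _x ∈ d.divisorsAntidiagonal, ((m : ℝ)⁻¹ * (d : ℝ)⁻¹) := by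
            rw [Finset.sum_const, nsmul_eq_mul, card_antidiag]; ring
    · rw [if_neg hsq, mul_zero]
      positivity
  have step2 : ∑ m ∈ Icc 1 M, ((m.totient : ℝ))⁻¹ ≤
      ∑ q ∈ (Icc 1 M) ×ˢ ((Icc 1 M) ×ˢ (Icc 1 M)),
        ((q.1 : ℝ) ^ 2)⁻¹ * (((q.2.1 : ℝ) ^ 2)⁻¹ * ((q.2.2 : ℝ))⁻¹) := by
    refine le_trans (Finset.sum_le_sum step1) ?_
    rw [show (∑ m ∈ Icc 1 M, ∑ d ∈ m.divisors, ∑ x ∈ d.divisorsAntidiagonal,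
        (m : ℝ)⁻¹ * (d : ℝ)⁻¹) = ∑ p ∈ (Icc 1 M).sigma
          (fun m => m.divisors.sigma (fun d => d.divisorsAntidiagonal)),
          ((p.1 : ℝ))⁻¹ * ((p.2.1 : ℝ))⁻¹ from by
      rw [Finset.sum_sigma]
      exact Finset.sum_congr rfl fun m _ => by rw [Finset.sum_sigma]]
    refine sum_le_sum_inj (fun p => (p.2.2.1, p.2.2.2, p.1 / p.2.1)) ?_ ?_ ?_ ?_
    · -- injectivity
      rintro ⟨m1, d1, a1, b1⟩ hp ⟨m2, d2, a2, b2⟩ hq heq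
      simp only [Finset.coe_sigma, Set.mem_sigma_iff, Finset.mem_coe, Finset.mem_sigma] at hp hq
      simp only [Prod.mk.injEq] at heq
      obtain ⟨ha, hb, he⟩ := heq
      obtain ⟨hm1, hd1, hx1⟩ := hp
      obtain ⟨hm2, hd2, hx2⟩ := hq
      have hab1 := (Nat.mem_divisorsAntidiagonal.mp hx1).1
      have hab2 := (Nat.mem_divisorsAntidiagonal.mp hx2).1
      have hdd : d1 = d2 := by rw [← hab1, ← hab2, ha, hb]
      have hdvd1 := (Nat.mem_divisors.mp hd1).1
      have hdvd2 := (Nat.mem_divisors.mp hd2).1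
      have hmm : m1 = m2 := by
        rw [← Nat.div_mul_cancel hdvd1, he, hdd, Nat.div_mul_cancel hdvd2]
      subst hdd hmm ha hb
      rfl
    · -- membership
      rintro ⟨m, d, a, b⟩ hp
      simp only [Finset.mem_sigma] at hp
      obtain ⟨hm, hd, hx⟩ := hp
      obtain ⟨hab, hd0⟩ := Nat.mem_divisorsAntidiagonal.mp hx
      obtain ⟨hdvd, hm0⟩ := Nat.mem_divisors.mp hd
      have hmM := (Finset.mem_Icc.mp hm).2
      have hm0' : 0 < m := Nat.pos_of_ne_zero hm0
      have hd0' : 0 < d := Nat.pos_of_ne_zero hd0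
      have ha0 : 0 < a := by rcases Nat.eq_zero_or_pos a with h | h; · simp [h] at hab; omega
                             · exact h
      have hb0 : 0 < b := by rcases Nat.eq_zero_or_pos b with h | h; · simp [h] at hab; omega
                             · exact h
      have hadvd : a ∣ d := Dvd.intro b hab
      have hbdvd : b ∣ d := Dvd.intro_left a hab
      have haM : a ≤ M := le_trans (le_trans (Nat.le_of_dvd hd0' hadvd)
        (Nat.le_of_dvd hm0' hdvd)) hmM
      have hbM : b ≤ M := le_trans (le_trans (Nat.le_of_dvd hd0' hbdvd)
        (Nat.le_of_dvd hm0' hdvd)) hmM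
      have heM : m / d ≤ M := le_trans (Nat.div_le_self m d) hmM
      have he1 : 1 ≤ m / d := (Nat.one_le_div_iff hd0').mpr (Nat.le_of_dvd hm0' hdvd)
      simp only [Finset.mem_product, Finset.mem_Icc]
      exact ⟨⟨ha0, haM⟩, ⟨hb0, hbM⟩, ⟨he1, heM⟩⟩
    · -- term inequality
      rintro ⟨m, d, a, b⟩ hp
      simp only [Finset.mem_sigma] at hp
      obtain ⟨hm, hd, hx⟩ := hp
      obtain ⟨hab, hd0⟩ := Nat.mem_divisorsAntidiagonal.mp hx
      obtain ⟨hdvd, hm0⟩ := Nat.mem_divisors.mp hd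
      have ha0 : a ≠ 0 := by rintro rfl; simp at hab; exact hd0 hab.symm
      have hb0 : b ≠ 0 := by rintro rfl; simp at hab; exact hd0 hab.symm
      have he0 : m / d ≠ 0 := by
        have : d ≤ m := Nat.le_of_dvd (Nat.pos_of_ne_zero hm0) hdvd
        have := Nat.one_le_div_iff (Nat.pos_of_ne_zero hd0) |>.mpr this
        omega
      have hdeq : (d : ℝ) = (a : ℝ) * b := by exact_mod_cast hab.symm
      have hmeq : (m : ℝ) = (a : ℝ) * b * (m / d : ℕ) := by
        rw [← hdeq]; exact_mod_cast (Nat.mul_div_cancel' hdvd).symm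
      rw [hmeq, hdeq]
      have haR : (a:ℝ) ≠ 0 := Nat.cast_ne_zero.mpr ha0
      have hbR : (b:ℝ) ≠ 0 := Nat.cast_ne_zero.mpr hb0
      have heR : ((m / d : ℕ):ℝ) ≠ 0 := Nat.cast_ne_zero.mpr he0
      field_simp
      ring_nf
      exact le_rfl
    · intro q _
      positivity
  refine step2.trans ?_
  have hsplit : ∑ q ∈ (Icc 1 M) ×ˢ ((Icc 1 M) ×ˢ (Icc 1 M)),
      ((q.1 : ℝ) ^ 2)⁻¹ * (((q.2.1 : ℝ) ^ 2)⁻¹ * ((q.2.2 : ℝ))⁻¹)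
      = (∑ a ∈ Icc 1 M, ((a : ℝ) ^ 2)⁻¹) *
        ((∑ b ∈ Icc 1 M, ((b : ℝ) ^ 2)⁻¹) * (∑ e ∈ Icc 1 M, ((e : ℝ))⁻¹)) := by
    rw [Finset.sum_product]
    simp_rw [Finset.sum_product, ← Finset.mul_sum]
    rw [← Finset.sum_mul, ← Finset.sum_mul]
  rw [hsplit]
  have h1 := sum_inv_sq_le M
  have h2 := sum_inv_le_harmonic M
  have hp1 : (0:ℝ) ≤ ∑ a ∈ Icc 1 M, ((a : ℝ) ^ 2)⁻¹ := by positivity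
  have hp2 : (0:ℝ) ≤ ∑ e ∈ Icc 1 M, ((e : ℝ))⁻¹ := by positivity
  calc (∑ a ∈ Icc 1 M, ((a : ℝ) ^ 2)⁻¹) *
        ((∑ b ∈ Icc 1 M, ((b : ℝ) ^ 2)⁻¹) * (∑ e ∈ Icc 1 M, ((e : ℝ))⁻¹))
      ≤ 2 * (2 * (1 + Real.log M)) := by
        have hb : (0:ℝ) ≤ (∑ b ∈ Icc 1 M, ((b : ℝ) ^ 2)⁻¹) * (∑ e ∈ Icc 1 M, ((e : ℝ))⁻¹) := by
          positivity
        refine mul_le_mul h1 ?_ hb (by norm_num)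
        exact mul_le_mul h1 h2 hp2 (by norm_num)
    _ = 4 * (1 + Real.log M) := by ring

theorem lamR_upper_bound :
    ∃ A : ℝ, 0 < A ∧ ∀ (R : ℝ) (n : ℕ), 3 ≤ R → 1 ≤ n →
      |lamR R n| ≤ A * (n.divisors.card : ℝ) * Real.log R * Real.log (Real.log R) := by
  have hlog3 : 1 < Real.log 3 := by
    rw [Real.lt_log_iff_exp_lt (by norm_num)]
    calc Real.exp 1 < 2.7182818286 := Real.exp_one_lt_d9
      _ < 3 := by norm_num
  have hll3 : 0 < Real.log (Real.log 3) := Real.log_pos hlog3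
  refine ⟨8 / Real.log (Real.log 3), by positivity, fun R n hR hn => ?_⟩
  set A := 8 / Real.log (Real.log 3) with hA
  have hn0 : n ≠ 0 := by omega
  have hRpos : (0:ℝ) < R := by linarith
  have hfloor1 : 1 ≤ ⌊R⌋₊ := Nat.one_le_floor_iff _ |>.mpr (by linarith)
  -- pointwise bound
  have hterm : ∀ r ∈ Finset.Icc 1 ⌊R⌋₊,
      |((moebius r : ℝ) ^ 2 / (r.totient : ℝ)) *
        ∑ d ∈ (Nat.gcd r n).divisors, (d : ℝ) * (moebius d : ℝ)|
      ≤ (((r / Nat.gcd r n).totient : ℝ))⁻¹ := by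
    intro r hr
    have hr1 : 1 ≤ r := (Finset.mem_Icc.mp hr).1
    by_cases hsq : Squarefree r
    · have hgd : Nat.gcd r n ∣ r := Nat.gcd_dvd_left r n
      have hgsq : Squarefree (Nat.gcd r n) := hsq.squarefree_of_dvd hgd
      have hμ : ((moebius r : ℝ)) ^ 2 = 1 := by
        have := moebius_sq_eq_one_of_squarefree hsq
        exact_mod_cast congrArg (fun z : ℤ => (z : ℝ)) this
      rw [abs_mul, inner_abs hgsq, abs_div, hμ, abs_one, abs_of_nonneg (by positivity)]
      have hrr : r = Nat.gcd r n * (r / Nat.gcd r n) := (Nat.mul_div_cancel' hgd).symm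
      have hcop : Nat.Coprime (Nat.gcd r n) (r / Nat.gcd r n) :=
        Nat.coprime_of_squarefree_mul (by rw [← hrr]; exact hsq)
      have hφ : r.totient = (Nat.gcd r n).totient * (r / Nat.gcd r n).totient := by
        conv_lhs => rw [hrr]
        exact Nat.totient_mul hcop
      have hg0 : 0 < Nat.gcd r n := Nat.gcd_pos_of_pos_left n (by omega)
      have hgφ : (0:ℝ) < ((Nat.gcd r n).totient : ℝ) := by
        exact_mod_cast Nat.totient_pos.mpr hg0
      rw [hφ]
      push_cast
      have hmpos : 0 < r / Nat.gcd r n := Nat.div_pos (Nat.le_of_dvd (by omega) hgd) hg0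
      have hmφ : (0:ℝ) < ((r / Nat.gcd r n).totient : ℝ) := by
        exact_mod_cast Nat.totient_pos.mpr hmpos
      refine le_of_eq (by field_simp)
    · have : moebius r = 0 := moebius_eq_zero_of_not_squarefree hsq
      rw [this]
      simp only [Int.cast_zero, ne_eq, OfNat.ofNat_ne_zero, not_false_eq_true, zero_pow,
        zero_div, zero_mul, abs_zero]
      positivity
  calc |lamR R n|
      ≤ ∑ r ∈ Finset.Icc 1 ⌊R⌋₊,
        |((moebius r : ℝ) ^ 2 / (r.totient : ℝ)) *
          ∑ d ∈ (Nat.gcd r n).divisors, (d : ℝ) * (moebius d : ℝ)| :=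
        Finset.abs_sum_le_sum_abs _ _
    _ ≤ ∑ q ∈ n.divisors ×ˢ Finset.Icc 1 ⌊R⌋₊, ((q.2.totient : ℝ))⁻¹ := by
        refine sum_le_sum_inj (fun r => (Nat.gcd r n, r / Nat.gcd r n)) ?_ ?_ hterm ?_
        · intro r hr r' hr' heq
          simp only [Finset.mem_coe, Finset.mem_Icc, Prod.mk.injEq] at hr hr' heq
          obtain ⟨h1, h2⟩ := heq
          have e1 : Nat.gcd r n * (r / Nat.gcd r n) = r := Nat.mul_div_cancel' (Nat.gcd_dvd_left r n)
          have e2 : Nat.gcd r' n * (r' / Nat.gcd r' n) = r' := Nat.mul_div_cancel' (Nat.gcd_dvd_left r' n)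
          calc r = Nat.gcd r n * (r / Nat.gcd r n) := e1.symm
            _ = Nat.gcd r' n * (r' / Nat.gcd r' n) := by rw [h2, h1]
            _ = r' := e2
        · intro r hr
          have hr1 : 1 ≤ r := (Finset.mem_Icc.mp hr).1
          have hrM : r ≤ ⌊R⌋₊ := (Finset.mem_Icc.mp hr).2
          have hg0 : 0 < Nat.gcd r n := Nat.gcd_pos_of_pos_left n (by omega)
          simp only [Finset.mem_product, Nat.mem_divisors, Finset.mem_Icc]
          refine ⟨⟨Nat.gcd_dvd_right r n, hn0⟩, ?_, le_trans (Nat.div_le_self r _) hrM⟩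
          exact (Nat.one_le_div_iff hg0).mpr (Nat.le_of_dvd (by omega) (Nat.gcd_dvd_left r n))
        · intro q _
          positivity
    _ = (n.divisors.card : ℝ) * ∑ m ∈ Finset.Icc 1 ⌊R⌋₊, ((m.totient : ℝ))⁻¹ := by
        rw [Finset.sum_product]
        simp only []
        rw [Finset.sum_const, nsmul_eq_mul]
    _ ≤ (n.divisors.card : ℝ) * (4 * (1 + Real.log R)) := by
        have hfl : Real.log (⌊R⌋₊ : ℝ) ≤ Real.log R :=
          Real.log_le_log (by exact_mod_cast hfloor1) (Nat.floor_le hRpos.le)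
        have hcard : (0:ℝ) ≤ (n.divisors.card : ℝ) := by positivity
        refine mul_le_mul_of_nonneg_left ?_ hcard
        refine (sum_inv_totient_le ⌊R⌋₊).trans (by linarith)
    _ ≤ A * (n.divisors.card : ℝ) * Real.log R * Real.log (Real.log R) := by
        have hlogR : 1 ≤ Real.log R :=
          le_trans hlog3.le (Real.log_le_log (by norm_num) hR)
        have hllR : Real.log (Real.log 3) ≤ Real.log (Real.log R) :=
          Real.log_le_log (by linarith) (Real.log_le_log (by norm_num) hR)
        have hcard : (0:ℝ) ≤ (n.divisors.card : ℝ) := by positivity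
        have key : 4 * (1 + Real.log R) ≤ A * Real.log R * Real.log (Real.log R) := by
          have h8 : A * Real.log (Real.log 3) = 8 := by
            rw [hA]; field_simp
          calc 4 * (1 + Real.log R) ≤ 8 * Real.log R := by linarith
            _ = A * Real.log (Real.log 3) * Real.log R := by rw [h8]
            _ ≤ A * Real.log (Real.log R) * Real.log R := by
                have hApos : 0 < A := by positivity
                gcongr
            _ = A * Real.log R * Real.log (Real.log R) := by ring
        calc (n.divisors.card : ℝ) * (4 * (1 + Real.log R))
            ≤ (n.divisors.card : ℝ) * (A * Real.log R * Real.log (Real.log R)) :=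
              mul_le_mul_of_nonneg_left key hcard
          _ = A * (n.divisors.card : ℝ) * Real.log R * Real.log (Real.log R) := by ring
end
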